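/- arXiv:2406.02514 — 4 statements merged into one kernel-verified Lean document; each statement's English description precedes it below -/
import Mathlib

section
/- Let d, n > 0 and let 0 < γ < 1 satisfy γ·d ≥ 1. Let G be a bipartite graph whose two vertex classes each have size (1±γ)n and in which every vertex v satisfies d_G(v) = (1±γ)d. Then G contains at least (1−10√γ)d pairwise edge-disjoint matchings, each of size at least (1−10√γ)n. -/
open SimpleGraph Finset
open scoped Classical symmDiff

noncomputable section

/-- A path in a graph `G`, recorded together with its two endvertices. -/
structure GraphPath {V : Type} (G : SimpleGraph V) where
  a : V
  b : V
  walk : G.Walk a b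
  isPath : walk.IsPath

namespace GraphPath

variable {V : Type} {G : SimpleGraph V}

/-- The edges of a path, as a finset. -/
def edgeFinset (P : GraphPath G) : Finset (Sym2 V) :=
  P.walk.edges.toFinset

/-- The vertices of a path, as a finset. -/
def vertexFinset (P : GraphPath G) : Finset V :=
  P.walk.support.toFinset

/-- `v` is an endvertex of the path `P`. -/
def IsEndvertex (P : GraphPath G) (v : V) : Prop :=
  v = P.a ∨ v = P.b

end GraphPath

/-- The set of edges used by a list of paths. -/
def pathListEdges {V : Type} {G : SimpleGraph V} (l : List (GraphPath G)) : Finset (Sym2 V) :=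
  l.foldr (fun P s => P.edgeFinset ∪ s) ∅

/-- A list of paths is pairwise edge-disjoint. -/
def EdgeDisjointPaths {V : Type} {G : SimpleGraph V} (l : List (GraphPath G)) : Prop :=
  l.Pairwise fun P Q => Disjoint P.edgeFinset Q.edgeFinset

/-- A path forest in `G`: a collection of pairwise vertex-disjoint paths
(equivalently, a subgraph each of whose connected components is a path). -/
structure PathForest {V : Type} (G : SimpleGraph V) where
  paths : List (GraphPath G)
  vertexDisjoint : paths.Pairwise fun P Q => ∀ v, v ∈ P.walk.support → v ∉ Q.walk.support

namespace PathForest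

variable {V : Type} {G : SimpleGraph V}

/-- The edges of a path forest. -/
def edgeFinset (F : PathForest G) : Finset (Sym2 V) :=
  pathListEdges F.paths

/-- The vertices of a path forest. -/
def vertexFinset (F : PathForest G) : Finset V :=
  F.paths.foldr (fun P s => P.vertexFinset ∪ s) ∅

/-- The number of paths of `F` having `v` as an endvertex. -/
def endCount (F : PathForest G) (v : V) : ℕ :=
  F.paths.countP fun P => decide (P.IsEndvertex v)

end PathForest

/-- A family of path forests is pairwise edge-disjoint. -/
def PairwiseEdgeDisjoint {V : Type} {G : SimpleGraph V} {k : ℕ}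
    (Ps : Fin k → PathForest G) : Prop :=
  ∀ i j, i ≠ j → Disjoint (Ps i).edgeFinset (Ps j).edgeFinset

/-- An `(m, Δ₀, Δ₁)`-bounded family of path forests: each forest has at most `m` paths, each
vertex is an endvertex of at most `Δ₀` paths in total, and, for each forest, each vertex has at
most `Δ₁` neighbours among the endvertices of the paths of the forest. -/
def BoundedFamily {V : Type} [Fintype V] {G : SimpleGraph V} {k : ℕ}
    (Ps : Fin k → PathForest G) (m Δ₀ Δ₁ : ℝ) : Prop :=
  (∀ i, (((Ps i).paths.length : ℕ) : ℝ) ≤ m) ∧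
  (∀ v : V, ((∑ i, (Ps i).endCount v : ℕ) : ℝ) ≤ Δ₀) ∧
  (∀ i, ∀ v : V,
    (((Finset.univ.filter fun u =>
        G.Adj v u ∧ ∃ P ∈ (Ps i).paths, P.IsEndvertex u).card : ℕ) : ℝ) ≤ Δ₁)

/-- The degree of `v` into the vertex set `X`, i.e. `d_G(v,X) = |N_G(v) ∩ X|`. -/
def degIn {V : Type} [Fintype V] (G : SimpleGraph V) (v : V) (X : Finset V) : ℕ :=
  (G.neighborFinset v ∩ X).card

/-- A graph on a finite vertex type is `(η,d,K)`-dense if it has a positive number of vertices,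
at most `K·d` vertices, and every vertex has degree at least `(1−η)d`. -/
def IsDenseGraph {V : Type} [Fintype V] (G : SimpleGraph V) (η d K : ℝ) : Prop :=
  0 < Fintype.card V ∧ (Fintype.card V : ℝ) ≤ K * d ∧
    ∀ v : V, (1 - η) * d ≤ (G.degree v : ℝ)

/-- A subgraph `H` of `G` is `(η,d,K)`-dense if `0 < |V(H)| ≤ K·d` and every vertex of `H`
has degree at least `(1−η)d` in `H`. -/
def IsDenseSubgraph {V : Type} {G : SimpleGraph V} (H : G.Subgraph) (η d K : ℝ) : Prop :=
  H.verts.Nonempty ∧ (H.verts.ncard : ℝ) ≤ K * d ∧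
    ∀ v ∈ H.verts, (1 - η) * d ≤ ((H.neighborSet v).ncard : ℝ)

/-- A graph is `(ζ,λ,d)`-connected if for all vertex sets `A`, `B` of size at least `ζ·d`
and every set `F` of at most `λ·d²` edges, there is a path between `A` and `B` in `G − F`. -/
def WellConnected {V : Type} (G : SimpleGraph V) (ζ lam d : ℝ) : Prop :=
  ∀ A B : Set V, ζ * d ≤ (A.ncard : ℝ) → ζ * d ≤ (B.ncard : ℝ) →
    ∀ F : Set (Sym2 V), F ⊆ G.edgeSet → ((F.ncard : ℝ) ≤ lam * d ^ 2) →
      ∃ a ∈ A, ∃ b ∈ B, ∃ p : (G.deleteEdges F).Walk a b, p.IsPath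


lemma matrix_decomp : ∀ (k : ℕ) {N : ℕ} (T : Fin N → Fin N → ℕ),
    (∀ i, ∑ j, T i j = k) → (∀ j, ∑ i, T i j = k) →
    ∃ g : Fin k → Fin N → Fin N, (∀ t, Function.Injective (g t)) ∧
      ∀ i j, (Finset.univ.filter fun t => g t i = j).card = T i j := by
  intro k
  induction k with
  | zero =>
    intro N T hrow _
    refine ⟨fun t => t.elim0, fun t => t.elim0, fun i j => ?_⟩
    have h1 : T i j = 0 := by
      have := hrow i
      have h2 : T i j ≤ ∑ j, T i j := Finset.single_le_sum (fun _ _ => Nat.zero_le _) (mem_univ j)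
      omega
    simp [h1]
  | succ k ih =>
    intro N T hrow hcol
    have hall : ∀ s : Finset (Fin N),
        s.card ≤ (s.biUnion fun i => Finset.univ.filter fun j => 0 < T i j).card := by
      intro s
      have h1 : (k+1) * s.card ≤ (k+1) * (s.biUnion fun i => Finset.univ.filter fun j => 0 < T i j).card := by
        calc (k+1) * s.card = ∑ i ∈ s, (k+1) := by rw [Finset.sum_const, smul_eq_mul, mul_comm]
        _ = ∑ i ∈ s, ∑ j, T i j := by simp [hrow]
        _ = ∑ i ∈ s, ∑ j ∈ (s.biUnion fun i => Finset.univ.filter fun j => 0 < T i j), T i j := by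
            refine Finset.sum_congr rfl fun i hi => ?_
            refine (Finset.sum_subset (Finset.subset_univ _) ?_).symm
            intro j _ hj
            by_contra h
            exact hj (Finset.mem_biUnion.2 ⟨i, hi, Finset.mem_filter.2 ⟨mem_univ _, Nat.pos_of_ne_zero h⟩⟩)
        _ = ∑ j ∈ (s.biUnion fun i => Finset.univ.filter fun j => 0 < T i j), ∑ i ∈ s, T i j :=
            Finset.sum_comm
        _ ≤ ∑ j ∈ (s.biUnion fun i => Finset.univ.filter fun j => 0 < T i j), (k+1) := by
            refine Finset.sum_le_sum fun j _ => ?_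
            rw [← hcol j]
            exact Finset.sum_le_sum_of_subset (Finset.subset_univ s)
        _ = (k+1) * (s.biUnion fun i => Finset.univ.filter fun j => 0 < T i j).card := by
            rw [Finset.sum_const, smul_eq_mul, mul_comm]
      exact Nat.le_of_mul_le_mul_left h1 (Nat.succ_pos k)
    obtain ⟨f, hfinj, hf⟩ := (Finset.all_card_le_biUnion_card_iff_exists_injective _).1 hall
    have hfpos : ∀ i, 0 < T i (f i) := fun i => (Finset.mem_filter.1 (hf i)).2
    have hfsurj : Function.Surjective f := Finite.surjective_of_injective hfinj
    set T' : Fin N → Fin N → ℕ := fun i j => T i j - if f i = j then 1 else 0 with hT'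
    have hpt : ∀ i j, T' i j + (if f i = j then 1 else 0) = T i j := by
      intro i j
      by_cases h : f i = j
      · subst h; have := hfpos i; simp [hT']; omega
      · simp [hT', h]
    have hrow' : ∀ i, ∑ j, T' i j = k := by
      intro i
      have h1 : (∑ j, T' i j) + (∑ j, if f i = j then 1 else 0) = ∑ j, T i j := by
        rw [← Finset.sum_add_distrib]
        exact Finset.sum_congr rfl fun j _ => hpt i j
      have h2 : (∑ j, if f i = j then 1 else 0) = 1 := by simp
      rw [h2, hrow i] at h1
      omega
    have hcol' : ∀ j, ∑ i, T' i j = k := by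
      intro j
      have h1 : (∑ i, T' i j) + (∑ i, if f i = j then 1 else 0) = ∑ i, T i j := by
        rw [← Finset.sum_add_distrib]
        exact Finset.sum_congr rfl fun i _ => hpt i j
      obtain ⟨i0, hi0⟩ := hfsurj j
      have h2 : (∑ i, if f i = j then 1 else 0) = 1 := by
        have : (Finset.univ.filter fun i => f i = j) = {i0} := by
          ext x
          simp only [Finset.mem_filter, Finset.mem_singleton, mem_univ, true_and]
          constructor
          · intro hx; exact hfinj (hx.trans hi0.symm)
          · intro hx; subst hx; exact hi0
        rw [← Finset.sum_filter, this]
        simp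
      rw [h2, hcol j] at h1
      omega
    obtain ⟨g', hg'inj, hg'⟩ := ih T' hrow' hcol'
    refine ⟨Fin.cases f g', ?_, ?_⟩
    · intro t
      refine Fin.cases ?_ ?_ t
      · simpa using hfinj
      · intro t'; simpa using hg'inj t'
    · intro i j
      have hcard : (Finset.univ.filter fun t : Fin (k+1) => Fin.cases f g' t i = j).card
          = ∑ t : Fin (k+1), if Fin.cases f g' t i = j then 1 else 0 := by
        rw [Finset.card_filter]
      rw [hcard, Fin.sum_univ_succ]
      have : (∑ t : Fin k, if Fin.cases f g' t.succ i = j then 1 else 0)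
          = (Finset.univ.filter fun t : Fin k => g' t i = j).card := by
        rw [Finset.card_filter]
        exact Finset.sum_congr rfl fun t _ => by by_cases hgt : g' t i = j <;> simp [hgt]
      rw [this, hg' i j]
      simp only [Fin.cases_zero]
      rw [← hpt i j]
      by_cases hfij : f i = j <;> simp [hfij] <;> omega

lemma filler_exists : ∀ (S : ℕ) {N : ℕ} (r c : Fin N → ℕ), ∑ i, r i = S → ∑ j, c j = S →
    ∃ f : Fin N → Fin N → ℕ, (∀ i, ∑ j, f i j = r i) ∧ (∀ j, ∑ i, f i j = c j) := by
  intro S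
  induction S with
  | zero =>
    intro N r c hr hc
    refine ⟨fun _ _ => 0, fun i => ?_, fun j => ?_⟩
    · simp only [Finset.sum_const_zero]
      have : r i ≤ ∑ i, r i := Finset.single_le_sum (fun _ _ => Nat.zero_le _) (mem_univ i)
      omega
    · simp only [Finset.sum_const_zero]
      have : c j ≤ ∑ j, c j := Finset.single_le_sum (fun _ _ => Nat.zero_le _) (mem_univ j)
      omega
  | succ S ih =>
    intro N r c hr hc
    have hi0 : ∃ i0, 0 < r i0 := by
      by_contra h
      push_neg at h
      simp only [Nat.le_zero] at h
      rw [Finset.sum_congr rfl fun i _ => h i] at hr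
      simp at hr
    have hj0 : ∃ j0, 0 < c j0 := by
      by_contra h
      push_neg at h
      simp only [Nat.le_zero] at h
      rw [Finset.sum_congr rfl fun j _ => h j] at hc
      simp at hc
    obtain ⟨i0, hi0⟩ := hi0
    obtain ⟨j0, hj0⟩ := hj0
    have hr' : ∑ i, Function.update r i0 (r i0 - 1) i = S := by
      rw [Finset.sum_update_of_mem (mem_univ i0), Finset.sdiff_singleton_eq_erase]
      rw [← Finset.sum_erase_add _ _ (mem_univ i0)] at hr
      omega
    have hc' : ∑ j, Function.update c j0 (c j0 - 1) j = S := by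
      rw [Finset.sum_update_of_mem (mem_univ j0), Finset.sdiff_singleton_eq_erase]
      rw [← Finset.sum_erase_add _ _ (mem_univ j0)] at hc
      omega
    obtain ⟨f, hfr, hfc⟩ := ih _ _ hr' hc'
    refine ⟨fun i j => f i j + if i = i0 ∧ j = j0 then 1 else 0, fun i => ?_, fun j => ?_⟩
    · rw [Finset.sum_add_distrib, hfr i]
      by_cases h : i = i0
      · subst h
        simp only [true_and]
        rw [Finset.sum_ite_eq' univ j0 (fun _ => 1)]
        simp [Function.update_self]
        omega
      · simp only [h, false_and, if_false, Finset.sum_const_zero, add_zero]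
        rw [Function.update_of_ne h]
    · rw [Finset.sum_add_distrib, hfc j]
      by_cases h : j = j0
      · subst h
        simp only [and_true]
        rw [Finset.sum_ite_eq' univ i0 (fun _ => 1)]
        simp [Function.update_self]
        omega
      · simp only [h, and_false, if_false, Finset.sum_const_zero, add_zero]
        rw [Function.update_of_ne h]

lemma final_arith (d n γ s K Dr : ℝ) (hd : 0 < d) (hn : 0 < n)
    (hs2 : s^2 = γ) (hs0 : 0 < s) (hcrit : 0 < 1 - 10*s)
    (hD : Dr ≤ (1+2*γ)*d)
    (hk : (1-γ)*n*((1-γ)*d) ≤ K*((1+γ)*n) + (Dr-K)*((1-10*s)*n)) :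
    (1-10*s)*d ≤ K := by
  have h1 : (1-γ)*((1-γ)*d) ≤ K*(1+γ) + (Dr-K)*(1-10*s) := by
    have h0 : n * ((1-γ)*((1-γ)*d)) ≤ n * (K*(1+γ) + (Dr-K)*(1-10*s)) := by nlinarith [hk]
    exact le_of_mul_le_mul_left h0 hn
  have h2 : (Dr-K)*(1-10*s) ≤ ((1+2*γ)*d - K)*(1-10*s) := by
    apply mul_le_mul_of_nonneg_right _ hcrit.le
    linarith
  have h3 : (1-γ)*((1-γ)*d) ≤ K*(1+γ) + ((1+2*γ)*d - K)*(1-10*s) := by linarith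
  have hγs : γ = s^2 := hs2.symm
  rw [hγs] at h3
  nlinarith [h3, hcrit, hs0, hd, mul_pos hs0 hd, mul_pos hs0 hs0,
    mul_nonneg (mul_nonneg hs0.le hs0.le) hd.le,
    mul_nonneg (mul_nonneg (mul_nonneg hs0.le hs0.le) hs0.le) hd.le,
    mul_nonneg (mul_nonneg (mul_nonneg (mul_nonneg hs0.le hs0.le) hs0.le) hs0.le) hd.le]

/-- Lemma 2.10. An almost-regular, almost-balanced bipartite graph contains
at least `(1−10√γ)d` pairwise edge-disjoint matchings, each of size at least `(1−10√γ)n`. -/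
theorem bipartite_many_large_matchings (d n γ : ℝ) (hd : 0 < d) (hn : 0 < n)
    (hγ0 : 0 < γ) (hγ1 : γ < 1) (hγd : 1 ≤ γ * d) :
    ∀ (V : Type) [Fintype V] (G : SimpleGraph V) (A B : Finset V),
      Disjoint A B → A ∪ B = Finset.univ →
      ((1 - γ) * n ≤ (A.card : ℝ) ∧ (A.card : ℝ) ≤ (1 + γ) * n) →
      ((1 - γ) * n ≤ (B.card : ℝ) ∧ (B.card : ℝ) ≤ (1 + γ) * n) →
      (∀ u v : V, G.Adj u v → (u ∈ A ∧ v ∈ B) ∨ (u ∈ B ∧ v ∈ A)) →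
      (∀ v : V, (1 - γ) * d ≤ (G.degree v : ℝ) ∧ (G.degree v : ℝ) ≤ (1 + γ) * d) →
      ∃ (k : ℕ) (M : Fin k → G.Subgraph),
        ((1 - 10 * Real.sqrt γ) * d ≤ (k : ℝ)) ∧
        (∀ i, (M i).IsMatching) ∧
        (∀ i j, i ≠ j → Disjoint (M i).edgeSet (M j).edgeSet) ∧
        (∀ i, (1 - 10 * Real.sqrt γ) * n ≤ (((M i).edgeSet.ncard : ℕ) : ℝ)) := by
  intro V _ G A B hAB hunion hA hB hAdj hdeg
  by_cases hcrit : 1 - 10 * Real.sqrt γ ≤ 0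
  · refine ⟨0, fun i => i.elim0, ?_, fun i => i.elim0, fun i j _ => i.elim0, fun i => i.elim0⟩
    have : (1 - 10 * Real.sqrt γ) * d ≤ 0 := mul_nonpos_of_nonpos_of_nonneg hcrit hd.le
    simpa using this
  push_neg at hcrit
  set s : ℝ := Real.sqrt γ with hsdef
  have hs0 : 0 < s := Real.sqrt_pos.2 hγ0
  have hs2 : s ^ 2 = γ := Real.sq_sqrt hγ0.le
  have h1γ : 0 < 1 - γ := by linarith
  -- A and B are nonempty
  have hAposR : (0:ℝ) < A.card := lt_of_lt_of_le (by nlinarith) hA.1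
  have hApos : 0 < A.card := by exact_mod_cast hAposR
  have hBposR : (0:ℝ) < B.card := lt_of_lt_of_le (by nlinarith) hB.1
  have hBpos : 0 < B.card := by exact_mod_cast hBposR
  obtain ⟨v0, hv0⟩ := Finset.card_pos.1 hApos
  set a := A.card with hadef
  set b := B.card with hbdef
  set N := max a b with hNdef
  have haN : a ≤ N := le_max_left a b
  have hbN : b ≤ N := le_max_right a b
  set vA : Fin N → V := fun i => if h : (i : ℕ) < a then ((A.equivFin.symm ⟨(i:ℕ), h⟩ : A) : V) else v0 with hvAdef
  set vB : Fin N → V := fun j => if h : (j : ℕ) < b then ((B.equivFin.symm ⟨(j:ℕ), h⟩ : B) : V) else v0 with hvBdef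
  have hvAmem : ∀ i : Fin N, (i:ℕ) < a → vA i ∈ A := by
    intro i h
    simp only [hvAdef, dif_pos h]
    exact (A.equivFin.symm ⟨(i:ℕ), h⟩).2
  have hvBmem : ∀ j : Fin N, (j:ℕ) < b → vB j ∈ B := by
    intro j h
    simp only [hvBdef, dif_pos h]
    exact (B.equivFin.symm ⟨(j:ℕ), h⟩).2
  have hvAinj : ∀ i i' : Fin N, (i:ℕ) < a → (i':ℕ) < a → vA i = vA i' → i = i' := by
    intro i i' h h' heq
    simp only [hvAdef, dif_pos h, dif_pos h'] at heq
    have h2 := A.equivFin.symm.injective (Subtype.coe_injective heq)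
    exact Fin.ext (by simpa using congrArg Fin.val h2)
  have hvBinj : ∀ j j' : Fin N, (j:ℕ) < b → (j':ℕ) < b → vB j = vB j' → j = j' := by
    intro j j' h h' heq
    simp only [hvBdef, dif_pos h, dif_pos h'] at heq
    have h2 := B.equivFin.symm.injective (Subtype.coe_injective heq)
    exact Fin.ext (by simpa using congrArg Fin.val h2)
  have hABdisj : ∀ u, u ∈ A → u ∉ B := fun u hu hb => (Finset.disjoint_left.1 hAB) hu hb
  have hvABne : ∀ i j : Fin N, (i:ℕ) < a → (j:ℕ) < b → vA i ≠ vB j := by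
    intro i j hi hj h
    exact hABdisj _ (hvAmem i hi) (h ▸ hvBmem j hj)
  -- surjectivity helpers
  have hvAsurj : ∀ w ∈ A, ∃ i : Fin N, (i:ℕ) < a ∧ vA i = w := by
    intro w hw
    refine ⟨⟨(A.equivFin ⟨w, hw⟩ : Fin a), lt_of_lt_of_le (A.equivFin ⟨w, hw⟩).isLt haN⟩,
      (A.equivFin ⟨w, hw⟩).isLt, ?_⟩
    simp only [hvAdef]
    rw [dif_pos]
    have h3 : (⟨((A.equivFin ⟨w, hw⟩ : Fin a) : ℕ), (A.equivFin ⟨w, hw⟩).isLt⟩ : Fin a)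
        = A.equivFin ⟨w, hw⟩ := Fin.ext rfl
    rw [h3, Equiv.symm_apply_apply]
    exact (A.equivFin ⟨w, hw⟩).isLt
  have hvBsurj : ∀ w ∈ B, ∃ j : Fin N, (j:ℕ) < b ∧ vB j = w := by
    intro w hw
    refine ⟨⟨(B.equivFin ⟨w, hw⟩ : Fin b), lt_of_lt_of_le (B.equivFin ⟨w, hw⟩).isLt hbN⟩,
      (B.equivFin ⟨w, hw⟩).isLt, ?_⟩
    simp only [hvBdef]
    rw [dif_pos]
    have h3 : (⟨((B.equivFin ⟨w, hw⟩ : Fin b) : ℕ), (B.equivFin ⟨w, hw⟩).isLt⟩ : Fin b)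
        = B.equivFin ⟨w, hw⟩ := Fin.ext rfl
    rw [h3, Equiv.symm_apply_apply]
    exact (B.equivFin ⟨w, hw⟩).isLt
  -- the regularity degree D
  set D : ℕ := ⌈(1 + γ) * d⌉₊ with hDdef
  have hdpos : (0:ℝ) < (1+γ)*d := by nlinarith
  have hD0 : 0 < D := Nat.ceil_pos.2 hdpos
  have hdegD : ∀ v, G.degree v ≤ D := by
    intro v
    have h1 : (G.degree v : ℝ) ≤ (1+γ)*d := (hdeg v).2
    have h2 : ((1+γ)*d) ≤ (D:ℝ) := Nat.le_ceil _
    exact_mod_cast h1.trans h2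
  have hDleR : (D:ℝ) ≤ (1 + 2*γ)*d := by
    have h1 : (D:ℝ) < (1+γ)*d + 1 := Nat.ceil_lt_add_one hdpos.le
    nlinarith
  -- the adjacency matrix
  set Tadj : Fin N → Fin N → ℕ :=
    fun i j => if ((i:ℕ) < a ∧ (j:ℕ) < b ∧ G.Adj (vA i) (vB j)) then 1 else 0 with hTadjdef
  have hrowA : ∀ i : Fin N, (i:ℕ) < a → ∑ j, Tadj i j = G.degree (vA i) := by
    intro i hi
    rw [← SimpleGraph.card_neighborFinset_eq_degree]
    have h1 : ∑ j, Tadj i j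
        = (univ.filter fun j : Fin N => (i:ℕ) < a ∧ (j:ℕ) < b ∧ G.Adj (vA i) (vB j)).card := by
      rw [Finset.card_filter]
    rw [h1]
    apply Finset.card_bij (fun j _ => vB j)
    · intro j hj
      rw [Finset.mem_filter] at hj
      exact (SimpleGraph.mem_neighborFinset _ _ _).2 hj.2.2.2
    · intro j hj j' hj' heq
      rw [Finset.mem_filter] at hj hj'
      exact hvBinj _ _ hj.2.2.1 hj'.2.2.1 heq
    · intro w hw
      rw [SimpleGraph.mem_neighborFinset] at hw
      have hwB : w ∈ B := by
        rcases hAdj _ _ hw with ⟨_, h2⟩ | ⟨h1, _⟩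
        · exact h2
        · exact absurd (hvAmem i hi) (fun hmem => hABdisj _ hmem h1)
      obtain ⟨j, hjb, hj⟩ := hvBsurj w hwB
      exact ⟨j, Finset.mem_filter.2 ⟨mem_univ _, hi, hjb, hj ▸ hw⟩, hj⟩
  have hcolB : ∀ j : Fin N, (j:ℕ) < b → ∑ i, Tadj i j = G.degree (vB j) := by
    intro j hj
    rw [← SimpleGraph.card_neighborFinset_eq_degree]
    have h1 : ∑ i, Tadj i j
        = (univ.filter fun i : Fin N => (i:ℕ) < a ∧ (j:ℕ) < b ∧ G.Adj (vA i) (vB j)).card := by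
      rw [Finset.card_filter]
    rw [h1]
    apply Finset.card_bij (fun i _ => vA i)
    · intro i hi
      rw [Finset.mem_filter] at hi
      exact (SimpleGraph.mem_neighborFinset _ _ _).2 hi.2.2.2.symm
    · intro i hi i' hi' heq
      rw [Finset.mem_filter] at hi hi'
      exact hvAinj _ _ hi.2.1 hi'.2.1 heq
    · intro w hw
      rw [SimpleGraph.mem_neighborFinset] at hw
      have hwA : w ∈ A := by
        rcases hAdj _ _ hw with ⟨h1, _⟩ | ⟨_, h2⟩
        · exact absurd (hvBmem j hj) (fun hmem => hABdisj _ h1 hmem)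
        · exact h2
      obtain ⟨i, hia, hi⟩ := hvAsurj w hwA
      exact ⟨i, Finset.mem_filter.2 ⟨mem_univ _, hia, hj, hi ▸ hw.symm⟩, hi⟩
  have hrow_le : ∀ i : Fin N, ∑ j, Tadj i j ≤ D := by
    intro i
    by_cases hi : (i:ℕ) < a
    · rw [hrowA i hi]; exact hdegD _
    · have : ∀ j ∈ univ, Tadj i j = 0 := by
        intro j _
        simp only [hTadjdef, ite_eq_right_iff]
        intro h; exact absurd h.1 hi
      rw [Finset.sum_congr rfl this]; simp
  have hcol_le : ∀ j : Fin N, ∑ i, Tadj i j ≤ D := by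
    intro j
    by_cases hj : (j:ℕ) < b
    · rw [hcolB j hj]; exact hdegD _
    · have : ∀ i ∈ univ, Tadj i j = 0 := by
        intro i _
        simp only [hTadjdef, ite_eq_right_iff]
        intro h; exact absurd h.2.1 hj
      rw [Finset.sum_congr rfl this]; simp
  -- margins and filler
  set rr : Fin N → ℕ := fun i => D - ∑ j, Tadj i j with hrrdef
  set cc : Fin N → ℕ := fun j => D - ∑ i, Tadj i j with hccdef
  have hrsum : ∑ i, rr i + ∑ i, ∑ j, Tadj i j = N * D := by
    rw [← Finset.sum_add_distrib]
    have h1 : ∀ i ∈ (univ : Finset (Fin N)), rr i + ∑ j, Tadj i j = D :=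
      fun i _ => Nat.sub_add_cancel (hrow_le i)
    rw [Finset.sum_congr rfl h1, Finset.sum_const, Finset.card_univ, Fintype.card_fin, smul_eq_mul]
  have hcsum : ∑ j, cc j + ∑ i, ∑ j, Tadj i j = N * D := by
    rw [Finset.sum_comm (s := univ) (t := univ) (f := fun i j => Tadj i j)]
    rw [← Finset.sum_add_distrib]
    have h1 : ∀ j ∈ (univ : Finset (Fin N)), cc j + ∑ i, Tadj i j = D :=
      fun j _ => Nat.sub_add_cancel (hcol_le j)
    rw [Finset.sum_congr rfl h1, Finset.sum_const, Finset.card_univ, Fintype.card_fin, smul_eq_mul]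
  obtain ⟨fil, hfilr, hfilc⟩ := filler_exists (∑ i, rr i) rr cc rfl (by omega)
  set T : Fin N → Fin N → ℕ := fun i j => Tadj i j + fil i j with hTdef
  have hTrow : ∀ i, ∑ j, T i j = D := by
    intro i
    simp only [hTdef]
    rw [Finset.sum_add_distrib, hfilr i]
    have h2 : rr i = D - ∑ j, Tadj i j := rfl
    have := hrow_le i
    omega
  have hTcol : ∀ j, ∑ i, T i j = D := by
    intro j
    simp only [hTdef]
    rw [Finset.sum_add_distrib, hfilc j]
    have h2 : cc j = D - ∑ i, Tadj i j := rfl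
    have := hcol_le j
    omega
  obtain ⟨g, hginj, hgcount⟩ := matrix_decomp D T hTrow hTcol
  -- the real pairs
  set RealP : Finset (Fin N × Fin N) :=
    univ.filter (fun p => (p.1:ℕ) < a ∧ (p.2:ℕ) < b ∧ G.Adj (vA p.1) (vB p.2)) with hRealdef
  have hRealmem : ∀ p : Fin N × Fin N, p ∈ RealP ↔
      ((p.1:ℕ) < a ∧ (p.2:ℕ) < b ∧ G.Adj (vA p.1) (vB p.2)) := by
    intro p; rw [hRealdef, Finset.mem_filter]; simp
  have hTadj1 : ∀ p ∈ RealP, Tadj p.1 p.2 = 1 := by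
    intro p hp
    rw [hRealmem] at hp
    simp only [hTadjdef, if_pos hp]
  have hmarkne : ∀ p ∈ RealP, (univ.filter fun t : Fin D => g t p.1 = p.2).Nonempty := by
    intro p hp
    rw [← Finset.card_pos, hgcount]
    have h1 := hTadj1 p hp
    simp only [hTdef]
    omega
  set mark : Fin N × Fin N → Fin D := fun p =>
    if h : (univ.filter fun t : Fin D => g t p.1 = p.2).Nonempty
    then (univ.filter fun t : Fin D => g t p.1 = p.2).min' h else ⟨0, hD0⟩ with hmarkdef
  have hmark_mem : ∀ p ∈ RealP, g (mark p) p.1 = p.2 := by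
    intro p hp
    have h := hmarkne p hp
    simp only [hmarkdef, dif_pos h]
    exact (Finset.mem_filter.1 (Finset.min'_mem _ h)).2
  set P : Fin D → Finset (Fin N × Fin N) := fun t => RealP.filter (fun p => mark p = t) with hPdef
  have hPReal : ∀ t, ∀ p ∈ P t, p ∈ RealP := fun t p hp => (Finset.mem_filter.1 hp).1
  have hPmark : ∀ t, ∀ p ∈ P t, mark p = t := fun t p hp => (Finset.mem_filter.1 hp).2
  have hPg : ∀ t, ∀ p ∈ P t, g t p.1 = p.2 := by
    intro t p hp
    have h1 := hmark_mem p (hPReal t p hp)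
    rw [hPmark t p hp] at h1
    exact h1
  -- partition of real pairs
  have hpartition : ∑ t : Fin D, (P t).card = RealP.card := by
    have h1 : ∀ t : Fin D, (P t).card = ∑ p ∈ RealP, if mark p = t then 1 else 0 := by
      intro t; rw [hPdef, Finset.card_filter]
    rw [Finset.sum_congr rfl fun t _ => h1 t, Finset.sum_comm]
    rw [Finset.card_eq_sum_ones RealP]
    refine Finset.sum_congr rfl fun p _ => ?_
    rw [Finset.sum_ite_eq univ (mark p) (fun _ => 1), if_pos (mem_univ _)]
  -- sizes of the pieces
  have hPcard_le : ∀ t, (P t).card ≤ a := by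
    intro t
    have h1 : ∀ p ∈ P t, vA p.1 ∈ A := fun p hp => hvAmem _ ((hRealmem p).1 (hPReal t p hp)).1
    have h2 : ∀ p ∈ P t, ∀ q ∈ P t, vA p.1 = vA q.1 → p = q := by
      intro p hp q hq heq
      have hp1 := (hRealmem p).1 (hPReal t p hp)
      have hq1 := (hRealmem q).1 (hPReal t q hq)
      have h3 : p.1 = q.1 := hvAinj _ _ hp1.1 hq1.1 heq
      have h4 : p.2 = q.2 := by
        rw [← hPg t p hp, ← hPg t q hq, h3]
      exact Prod.ext h3 h4
    exact Finset.card_le_card_of_injOn (fun p => vA p.1) h1 h2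
  -- lower bound on the number of real pairs
  have hRealcard : ∑ i, ∑ j, Tadj i j = RealP.card := by
    rw [hRealdef, Finset.card_filter, Fintype.sum_prod_type]
  have hdegsumA : ∑ v ∈ A, G.degree v ≤ ∑ i, ∑ j, Tadj i j := by
    have himg : (univ.filter (fun i : Fin N => (i:ℕ) < a)).image vA = A := by
      apply Finset.Subset.antisymm
      · intro v hv
        obtain ⟨i, hi, rfl⟩ := Finset.mem_image.1 hv
        exact hvAmem i (Finset.mem_filter.1 hi).2
      · intro v hv
        obtain ⟨i, hia, hvi⟩ := hvAsurj v hv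
        exact Finset.mem_image.2 ⟨i, Finset.mem_filter.2 ⟨mem_univ _, hia⟩, hvi⟩
    have h1 : ∑ v ∈ A, G.degree v
        = ∑ i ∈ univ.filter (fun i : Fin N => (i:ℕ) < a), G.degree (vA i) := by
      rw [← himg, Finset.sum_image]
      intro i hi j hj h
      exact hvAinj i j (Finset.mem_filter.1 hi).2 (Finset.mem_filter.1 hj).2 h
    rw [h1]
    calc ∑ i ∈ univ.filter (fun i : Fin N => (i:ℕ) < a), G.degree (vA i)
        = ∑ i ∈ univ.filter (fun i : Fin N => (i:ℕ) < a), ∑ j, Tadj i j :=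
          Finset.sum_congr rfl fun i hi => (hrowA i (Finset.mem_filter.1 hi).2).symm
      _ ≤ ∑ i, ∑ j, Tadj i j := Finset.sum_le_sum_of_subset (Finset.filter_subset _ _)
  -- the subgraphs
  set Msub : Fin D → G.Subgraph := fun t =>
    { verts := {v | ∃ p ∈ P t, v = vA p.1 ∨ v = vB p.2}
      Adj := fun u w => ∃ p ∈ P t, (u = vA p.1 ∧ w = vB p.2) ∨ (u = vB p.2 ∧ w = vA p.1)
      adj_sub := by
        rintro u w ⟨p, hp, ⟨hu, hw⟩ | ⟨hu, hw⟩⟩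
        · have hpr := (hRealmem p).1 (hPReal _ p hp)
          rw [hu, hw]; exact hpr.2.2
        · have hpr := (hRealmem p).1 (hPReal _ p hp)
          rw [hu, hw]; exact hpr.2.2.symm
      edge_vert := by
        rintro u w ⟨p, hp, ⟨hu, _⟩ | ⟨hu, _⟩⟩
        · exact ⟨p, hp, Or.inl hu⟩
        · exact ⟨p, hp, Or.inr hu⟩
      symm := by
        constructor
        rintro u w ⟨p, hp, ⟨hu, hw⟩ | ⟨hu, hw⟩⟩
        · exact ⟨p, hp, Or.inr ⟨hw, hu⟩⟩
        · exact ⟨p, hp, Or.inl ⟨hw, hu⟩⟩ } with hMsubdef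
  have hMadj : ∀ t u w, (Msub t).Adj u w ↔
      ∃ p ∈ P t, (u = vA p.1 ∧ w = vB p.2) ∨ (u = vB p.2 ∧ w = vA p.1) := by
    intro t u w; rw [hMsubdef]
  have hMverts : ∀ t v, v ∈ (Msub t).verts ↔ ∃ p ∈ P t, v = vA p.1 ∨ v = vB p.2 := by
    intro t v; rw [hMsubdef]; rfl
  -- matchings
  have hmatch : ∀ t, (Msub t).IsMatching := by
    intro t v hv
    rw [hMverts] at hv
    obtain ⟨p, hp, hvp | hvp⟩ := hv
    · have hpr := (hRealmem p).1 (hPReal t p hp)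
      refine ⟨vB p.2, (hMadj t v _).2 ⟨p, hp, Or.inl ⟨hvp, rfl⟩⟩, ?_⟩
      intro w hw
      rw [hMadj] at hw
      obtain ⟨q, hq, ⟨hu, hw'⟩ | ⟨hu, hw'⟩⟩ := hw
      · have hqr := (hRealmem q).1 (hPReal t q hq)
        have h1 : p.1 = q.1 := hvAinj _ _ hpr.1 hqr.1 (hvp ▸ hu)
        have h2 : q.2 = p.2 := by rw [← hPg t p hp, ← hPg t q hq, h1]
        rw [hw', h2]
      · have hqr := (hRealmem q).1 (hPReal t q hq)
        exact absurd (hvp ▸ hu) (hvABne _ _ hpr.1 hqr.2.1)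
    · have hpr := (hRealmem p).1 (hPReal t p hp)
      refine ⟨vA p.1, (hMadj t v _).2 ⟨p, hp, Or.inr ⟨hvp, rfl⟩⟩, ?_⟩
      intro w hw
      rw [hMadj] at hw
      obtain ⟨q, hq, ⟨hu, hw'⟩ | ⟨hu, hw'⟩⟩ := hw
      · have hqr := (hRealmem q).1 (hPReal t q hq)
        exact absurd (hvp ▸ hu).symm (hvABne _ _ hqr.1 hpr.2.1)
      · have hqr := (hRealmem q).1 (hPReal t q hq)
        have h1 : p.2 = q.2 := hvBinj _ _ hpr.2.1 hqr.2.1 (hvp ▸ hu)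
        have h2 : g t p.1 = g t q.1 := by rw [hPg t p hp, hPg t q hq, h1]
        have h3 : q.1 = p.1 := (hginj t h2).symm
        rw [hw', h3]
  -- injectivity of the edge map on real pairs
  have hedgeinj : ∀ p ∈ RealP, ∀ q ∈ RealP,
      s(vA p.1, vB p.2) = s(vA q.1, vB q.2) → p = q := by
    intro p hp q hq he
    rw [Sym2.eq_iff] at he
    rcases he with ⟨h1, h2⟩ | ⟨h1, h2⟩
    · exact Prod.ext (hvAinj _ _ ((hRealmem p).1 hp).1 ((hRealmem q).1 hq).1 h1)
        (hvBinj _ _ ((hRealmem p).1 hp).2.1 ((hRealmem q).1 hq).2.1 h2)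
    · exact absurd h1 (hvABne _ _ ((hRealmem p).1 hp).1 ((hRealmem q).1 hq).2.1)
  -- edge sets
  have hedge : ∀ t, (Msub t).edgeSet = ↑((P t).image fun p => s(vA p.1, vB p.2)) := by
    intro t
    ext e
    induction e with
    | h u w =>
      simp only [SimpleGraph.Subgraph.mem_edgeSet, Finset.coe_image, Set.mem_image,
        Finset.mem_coe, hMadj]
      constructor
      · rintro ⟨p, hp, ⟨hu, hw⟩ | ⟨hu, hw⟩⟩
        · exact ⟨p, hp, by rw [hu, hw]⟩
        · exact ⟨p, hp, by rw [hu, hw, Sym2.eq_swap]⟩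
      · rintro ⟨p, hp, he⟩
        rw [Sym2.eq_iff] at he
        rcases he with ⟨h1, h2⟩ | ⟨h1, h2⟩
        · exact ⟨p, hp, Or.inl ⟨h1.symm, h2.symm⟩⟩
        · exact ⟨p, hp, Or.inr ⟨h2.symm, h1.symm⟩⟩
  have hcardeq : ∀ t, (Msub t).edgeSet.ncard = (P t).card := by
    intro t
    rw [hedge t, Set.ncard_coe_finset]
    apply Finset.card_image_of_injOn
    intro p hp q hq he
    exact hedgeinj p (hPReal t p hp) q (hPReal t q hq) he
  -- pairwise disjointness
  have hdisj : ∀ t t', t ≠ t' → Disjoint (Msub t).edgeSet (Msub t').edgeSet := by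
    intro t t' hne
    rw [Set.disjoint_left]
    intro e het het'
    rw [hedge t] at het
    rw [hedge t'] at het'
    rw [Finset.coe_image, Set.mem_image] at het het'
    obtain ⟨p, hp, hep⟩ := het
    obtain ⟨q, hq, heq⟩ := het'
    rw [Finset.mem_coe] at hp hq
    have hpq : p = q := hedgeinj p (hPReal t p hp) q (hPReal t' q hq) (hep.trans heq.symm)
    apply hne
    rw [← hPmark t p hp, hpq, hPmark t' q hq]
  -- choose the good indices
  set good : Finset (Fin D) := univ.filter (fun t => (1 - 10*s) * n ≤ ((P t).card : ℝ))
    with hgooddef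
  set k := good.card with hkdef
  refine ⟨k, fun i => Msub ((good.equivFin.symm i : good) : Fin D), ?_, ?_, ?_, ?_⟩
  · -- main counting inequality
    have hkD : k ≤ D := by
      calc k ≤ (univ : Finset (Fin D)).card := Finset.card_filter_le _ _
        _ = D := by rw [Finset.card_univ, Fintype.card_fin]
    have hsum1 : (1-γ)*n*((1-γ)*d) ≤ (RealP.card : ℝ) := by
      have h2 : (a:ℝ)*((1-γ)*d) ≤ ∑ v ∈ A, (G.degree v : ℝ) := by
        calc (a:ℝ)*((1-γ)*d) = ∑ _v ∈ A, (1-γ)*d := by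
              rw [Finset.sum_const, nsmul_eq_mul, hadef]
          _ ≤ ∑ v ∈ A, (G.degree v : ℝ) := Finset.sum_le_sum fun v _ => (hdeg v).1
      have h3 : (∑ v ∈ A, (G.degree v : ℝ)) ≤ (RealP.card : ℝ) := by
        have h4 : ∑ v ∈ A, G.degree v ≤ RealP.card := hRealcard ▸ hdegsumA
        calc (∑ v ∈ A, (G.degree v : ℝ)) = ((∑ v ∈ A, G.degree v : ℕ) : ℝ) := by push_cast; ring
          _ ≤ (RealP.card : ℝ) := by exact_mod_cast h4
      have h5 : (1-γ)*n*((1-γ)*d) ≤ (a:ℝ)*((1-γ)*d) := by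
        have h6 : (1-γ)*n ≤ (a:ℝ) := hA.1
        have h7 : (0:ℝ) ≤ (1-γ)*d := by positivity
        exact mul_le_mul_of_nonneg_right h6 h7
      linarith
    have hpart : (RealP.card : ℝ) = ∑ t : Fin D, ((P t).card : ℝ) := by
      rw [← hpartition]; push_cast; ring
    have hgoodsum : ∑ t ∈ good, ((P t).card : ℝ) ≤ (k:ℝ) * ((1+γ)*n) := by
      calc ∑ t ∈ good, ((P t).card : ℝ) ≤ ∑ _t ∈ good, (1+γ)*n := by
            refine Finset.sum_le_sum fun t _ => ?_
            have h1 : ((P t).card : ℝ) ≤ (a:ℝ) := by exact_mod_cast hPcard_le t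
            exact h1.trans hA.2
        _ = (k:ℝ) * ((1+γ)*n) := by rw [Finset.sum_const, nsmul_eq_mul, hkdef]
    have hbadsum : ∑ t ∈ univ.filter (fun t => ¬ ((1 - 10*s) * n ≤ ((P t).card : ℝ))),
        ((P t).card : ℝ) ≤ ((D:ℝ) - k) * ((1-10*s)*n) := by
      have hcount : (univ.filter (fun t : Fin D => ¬ ((1 - 10*s) * n ≤ ((P t).card : ℝ)))).card
          = D - k := by
        have h1 := Finset.card_filter_add_card_filter_not
          (s := (univ : Finset (Fin D))) (p := fun t => (1 - 10*s) * n ≤ ((P t).card : ℝ))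
        rw [Finset.card_univ, Fintype.card_fin] at h1
        rw [hkdef, hgooddef]
        omega
      calc ∑ t ∈ univ.filter (fun t => ¬ ((1 - 10*s) * n ≤ ((P t).card : ℝ))), ((P t).card : ℝ)
          ≤ ∑ _t ∈ univ.filter (fun t => ¬ ((1 - 10*s) * n ≤ ((P t).card : ℝ))), (1-10*s)*n := by
            refine Finset.sum_le_sum fun t ht => ?_
            exact (lt_of_not_ge (Finset.mem_filter.1 ht).2).le
        _ = ((D:ℝ) - k) * ((1-10*s)*n) := by
            rw [Finset.sum_const, nsmul_eq_mul, hcount, Nat.cast_sub hkD]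
    have hsplit : ∑ t : Fin D, ((P t).card : ℝ)
        = ∑ t ∈ good, ((P t).card : ℝ)
          + ∑ t ∈ univ.filter (fun t => ¬ ((1 - 10*s) * n ≤ ((P t).card : ℝ))), ((P t).card : ℝ) := by
      rw [hgooddef]
      exact (Finset.sum_filter_add_sum_filter_not univ _ _).symm
    have hk : (1-γ)*n*((1-γ)*d) ≤ (k:ℝ)*((1+γ)*n) + ((D:ℝ)-k)*((1-10*s)*n) := by
      rw [hpart, hsplit] at hsum1
      linarith
    exact final_arith d n γ s (k:ℝ) (D:ℝ) hd hn hs2 hs0 hcrit hDleR hk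
  · intro i
    exact hmatch _
  · intro i j hne
    apply hdisj
    intro h
    exact hne (good.equivFin.symm.injective (Subtype.ext h))
  · intro i
    rw [hcardeq]
    have h1 := ((good.equivFin.symm i : good)).2
    have h2 := Finset.mem_filter.1 h1
    exact_mod_cast h2.2

end
end

section
/- For every K ≥ 1 and every 0 < β ≤ 1/4 there exists λ₀ > 0 such that for every 0 < λ ≤ λ₀ there exists d₀ ∈ ℕ such that the following holds for all d ≥ d₀. Let G be a (β,d,K)-dense graph. Then, for some t ≤ 2K, there exist a set J ⊆ V(G) and pairwise vertex-disjoint subgraphs G₁,…,G_t of G with V(G) = V(G₁) ∪ … ∪ V(G_t) such that: (i) |J| ≤ √λ·d; (ii) G_i − J is (2β,d,K)-dense for each i ∈ [t]; and (iii) G_i is (λ^{1/4}, λ, d)-connected for each i ∈ [t]. -/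
open SimpleGraph Finset
open scoped Classical symmDiff

noncomputable section

section AuxLemmas
set_option linter.unusedVariables false

variable {V : Type} [Fintype V]

/-- The induced subgraph of `G` on a finset `S`. -/
def indSub (G : SimpleGraph V) (S : Finset V) : G.Subgraph :=
  (⊤ : G.Subgraph).induce (S : Set V)

set_option linter.unusedSectionVars false
set_option maxHeartbeats 1000000

lemma split_lemma (G : SimpleGraph V) (ζ lam d : ℝ) (hζd : 0 < ζ * d) (S : Finset V)
    (hnc : ¬ WellConnected (indSub G S).coe ζ lam d) :
    ∃ S₁ S₂ : Finset V, Disjoint S₁ S₂ ∧ S₁ ∪ S₂ = S ∧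
      ζ * d ≤ (S₁.card : ℝ) ∧ ζ * d ≤ (S₂.card : ℝ) ∧
      ((∑ v ∈ S₁, ((G.neighborFinset v ∩ S₂).card : ℝ)) +
       ∑ v ∈ S₂, ((G.neighborFinset v ∩ S₁).card : ℝ)) ≤ 2 * (lam * d ^ 2) := by
  unfold WellConnected at hnc
  push_neg at hnc
  obtain ⟨A, B, hA, hB, F, hFsub, hFcard, hno⟩ := hnc
  set H := (indSub G S).coe with hH
  set G' := H.deleteEdges F with hG'
  set R : Set ↥(S : Set V) := {v | ∃ a ∈ A, G'.Reachable a v} with hR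
  -- B is disjoint from R
  have hBR : ∀ b ∈ B, b ∉ R := by
    intro b hb hbR
    obtain ⟨a, ha, hr⟩ := hbR
    obtain ⟨w⟩ := hr
    exact hno a ha b hb w.toPath.1 w.toPath.2
  set S₁ : Finset V := S.filter (fun x => ∀ h : x ∈ (S : Set V), (⟨x, h⟩ : ↥(S : Set V)) ∈ R) with hS₁
  set S₂ : Finset V := S \ S₁ with hS₂
  have hdisj : Disjoint S₁ S₂ := Finset.disjoint_sdiff
  have hS₁sub : S₁ ⊆ S := Finset.filter_subset _ _
  have hunion : S₁ ∪ S₂ = S := Finset.union_sdiff_of_subset hS₁sub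
  have hmemS₁ : ∀ (x : V) (h : x ∈ (S : Set V)), x ∈ S₁ ↔ (⟨x, h⟩ : ↥(S : Set V)) ∈ R := by
    intro x h
    constructor
    · intro hx
      exact (Finset.mem_filter.1 hx).2 h
    · intro hx
      refine Finset.mem_filter.2 ⟨h, fun h' => ?_⟩
      convert hx
  -- size bounds
  have hAcard : ζ * d ≤ (S₁.card : ℝ) := by
    have hsub : Subtype.val '' A ⊆ (S₁ : Set V) := by
      rintro x ⟨a, haA, rfl⟩
      exact (hmemS₁ _ a.2).2 ⟨a, haA, Reachable.refl a⟩
    have h1 : A.ncard = (Subtype.val '' A).ncard :=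
      (Set.ncard_image_of_injective A Subtype.val_injective).symm
    have h2 : (Subtype.val '' A).ncard ≤ S₁.card := by
      rw [← Set.ncard_coe_finset]
      exact Set.ncard_le_ncard hsub (S₁ : Set V).toFinite
    calc ζ * d ≤ (A.ncard : ℝ) := hA
      _ ≤ (S₁.card : ℝ) := by rw [h1]; exact_mod_cast h2
  have hBcard : ζ * d ≤ (S₂.card : ℝ) := by
    have hsub : Subtype.val '' B ⊆ (S₂ : Set V) := by
      rintro x ⟨b, hbB, rfl⟩
      have hbS : (b : V) ∈ S := b.2
      have : (b : V) ∉ S₁ := by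
        intro hx
        have := (hmemS₁ _ b.2).1 hx
        exact hBR b hbB this
      simp [hS₂, hbS, this]
    have h1 : B.ncard = (Subtype.val '' B).ncard :=
      (Set.ncard_image_of_injective B Subtype.val_injective).symm
    have h2 : (Subtype.val '' B).ncard ≤ S₂.card := by
      rw [← Set.ncard_coe_finset]
      exact Set.ncard_le_ncard hsub (S₂ : Set V).toFinite
    calc ζ * d ≤ (B.ncard : ℝ) := hB
      _ ≤ (S₂.card : ℝ) := by rw [h1]; exact_mod_cast h2
  refine ⟨S₁, S₂, hdisj, hunion, hAcard, hBcard, ?_⟩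
  -- cut edges are in F
  have hcut : ∀ u ∈ S₁, ∀ w ∈ S₂, G.Adj u w →
      ∃ e ∈ F, Sym2.map Subtype.val e = s(u, w) := by
    intro u hu w hw hadj
    have huS : u ∈ (S : Set V) := Finset.mem_coe.2 (hS₁sub hu)
    have hwS : w ∈ (S : Set V) := Finset.mem_coe.2 (Finset.mem_sdiff.1 hw).1
    have hHadj : H.Adj ⟨u, huS⟩ ⟨w, hwS⟩ := by
      rw [hH, SimpleGraph.Subgraph.coe_adj]
      simp [indSub, SimpleGraph.Subgraph.induce_adj, huS, hwS, hadj]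
    by_cases hin : s((⟨u, huS⟩ : ↥(S : Set V)), ⟨w, hwS⟩) ∈ F
    · exact ⟨_, hin, rfl⟩
    · exfalso
      have hG'adj : G'.Adj ⟨u, huS⟩ ⟨w, hwS⟩ := by
        rw [hG', SimpleGraph.deleteEdges_adj]
        exact ⟨hHadj, hin⟩
      have huR : (⟨u, huS⟩ : ↥(S : Set V)) ∈ R := (hmemS₁ u huS).1 hu
      obtain ⟨a, ha, hr⟩ := huR
      have hwR : (⟨w, hwS⟩ : ↥(S : Set V)) ∈ R := ⟨a, ha, hr.trans hG'adj.reachable⟩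
      have : w ∈ S₁ := (hmemS₁ w hwS).2 hwR
      exact (Finset.mem_sdiff.1 hw).2 this
  -- the cut edge finsets
  set E₁ : Finset (Sym2 V) :=
    S₁.biUnion (fun v => (G.neighborFinset v ∩ S₂).image (fun w => s(v, w))) with hE₁
  set E₂ : Finset (Sym2 V) :=
    S₂.biUnion (fun v => (G.neighborFinset v ∩ S₁).image (fun w => s(v, w))) with hE₂
  have hdisj' : ∀ x ∈ S₁, ∀ y ∈ S₂, x ≠ y := by
    intro x hx y hy h
    exact Finset.disjoint_left.1 hdisj hx (h ▸ hy)
  have hmemE₁ : ∀ e, e ∈ E₁ ↔ ∃ v ∈ S₁, ∃ w ∈ S₂, G.Adj v w ∧ e = s(v, w) := by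
    intro e
    simp only [hE₁, Finset.mem_biUnion, Finset.mem_image, Finset.mem_inter,
      SimpleGraph.mem_neighborFinset]
    constructor
    · rintro ⟨v, hv, w, ⟨hadj, hw⟩, rfl⟩
      exact ⟨v, hv, w, hw, hadj, rfl⟩
    · rintro ⟨v, hv, w, hw, hadj, rfl⟩
      exact ⟨v, hv, w, ⟨hadj, hw⟩, rfl⟩
  have hmemE₂ : ∀ e, e ∈ E₂ ↔ ∃ v ∈ S₂, ∃ w ∈ S₁, G.Adj v w ∧ e = s(v, w) := by
    intro e
    simp only [hE₂, Finset.mem_biUnion, Finset.mem_image, Finset.mem_inter,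
      SimpleGraph.mem_neighborFinset]
    constructor
    · rintro ⟨v, hv, w, ⟨hadj, hw⟩, rfl⟩
      exact ⟨v, hv, w, hw, hadj, rfl⟩
    · rintro ⟨v, hv, w, hw, hadj, rfl⟩
      exact ⟨v, hv, w, ⟨hadj, hw⟩, rfl⟩
  have hEeq : E₂ = E₁ := by
    ext e
    rw [hmemE₁, hmemE₂]
    constructor
    · rintro ⟨v, hv, w, hw, hadj, rfl⟩
      exact ⟨w, hw, v, hv, hadj.symm, Sym2.eq_swap.symm⟩
    · rintro ⟨v, hv, w, hw, hadj, rfl⟩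
      exact ⟨w, hw, v, hv, hadj.symm, Sym2.eq_swap.symm⟩
  have hcard₁ : E₁.card = ∑ v ∈ S₁, (G.neighborFinset v ∩ S₂).card := by
    rw [hE₁, Finset.card_biUnion]
    · refine Finset.sum_congr rfl fun v hv => ?_
      apply Finset.card_image_of_injOn
      intro w hw w' hw' hww'
      rcases Sym2.eq_iff.1 hww' with ⟨-, h⟩ | ⟨h1, h2⟩
      · exact h
      · exact absurd h1 (hdisj' v hv w' (Finset.mem_inter.1 hw').2)
    · intro x hx y hy hxy
      rw [Function.onFun, Finset.disjoint_left]
      rintro e he he'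
      obtain ⟨w, hw, rfl⟩ := Finset.mem_image.1 he
      obtain ⟨w', hw', heq⟩ := Finset.mem_image.1 he'
      rcases Sym2.eq_iff.1 heq with ⟨h1, -⟩ | ⟨h1, h2⟩
      · exact hxy h1.symm
      · exact hdisj' x hx w' (Finset.mem_inter.1 hw').2 h2.symm
  have hcard₂ : E₂.card = ∑ v ∈ S₂, (G.neighborFinset v ∩ S₁).card := by
    rw [hE₂, Finset.card_biUnion]
    · refine Finset.sum_congr rfl fun v hv => ?_
      apply Finset.card_image_of_injOn
      intro w hw w' hw' hww'
      rcases Sym2.eq_iff.1 hww' with ⟨-, h⟩ | ⟨h1, h2⟩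
      · exact h
      · exact absurd h1 ((hdisj' w' (Finset.mem_inter.1 hw').2 v hv).symm)
    · intro x hx y hy hxy
      rw [Function.onFun, Finset.disjoint_left]
      rintro e he he'
      obtain ⟨w, hw, rfl⟩ := Finset.mem_image.1 he
      obtain ⟨w', hw', heq⟩ := Finset.mem_image.1 he'
      rcases Sym2.eq_iff.1 heq with ⟨h1, -⟩ | ⟨h1, h2⟩
      · exact hxy h1.symm
      · exact hdisj' w' (Finset.mem_inter.1 hw').2 x hx h2
  -- E₁ injects into F
  have hFfin : F.Finite := Set.toFinite F
  have hE₁F : (E₁ : Set (Sym2 V)) ⊆ (Sym2.map Subtype.val) '' F := by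
    intro e he
    obtain ⟨v, hv, w, hw, hadj, rfl⟩ := (hmemE₁ e).1 he
    obtain ⟨e', he', heq⟩ := hcut v hv w hw hadj
    exact ⟨e', he', heq⟩
  have hE₁card : (E₁.card : ℝ) ≤ lam * d ^ 2 := by
    have h1 : E₁.card ≤ ((Sym2.map Subtype.val) '' F).ncard := by
      rw [← Set.ncard_coe_finset]
      exact Set.ncard_le_ncard hE₁F (hFfin.image _)
    have h2 : ((Sym2.map Subtype.val) '' F).ncard ≤ F.ncard := Set.ncard_image_le hFfin
    calc (E₁.card : ℝ) ≤ (F.ncard : ℝ) := by exact_mod_cast h1.trans h2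
      _ ≤ lam * d ^ 2 := hFcard
  have hsum₁ : ∑ v ∈ S₁, ((G.neighborFinset v ∩ S₂).card : ℝ) = (E₁.card : ℝ) := by
    rw [hcard₁]; push_cast; ring
  have hsum₂ : ∑ v ∈ S₂, ((G.neighborFinset v ∩ S₁).card : ℝ) = (E₁.card : ℝ) := by
    rw [← hEeq, hcard₂]; push_cast; ring
  rw [hsum₁, hsum₂]
  linarith

lemma lemA (G : SimpleGraph V) (ζ lam d : ℝ) (hζd : 0 < ζ * d) (hlam : 0 ≤ lam * d ^ 2) :
    ∀ n : ℕ, ∀ S : Finset V, S.card ≤ n → ζ * d ≤ (S.card : ℝ) →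
      ∃ (t : ℕ) (P : Fin t → Finset V),
        (∀ i j, i ≠ j → Disjoint (P i) (P j)) ∧
        (Finset.univ.biUnion P = S) ∧
        (∀ i, ζ * d ≤ ((P i).card : ℝ)) ∧
        (∀ i, WellConnected (indSub G (P i)).coe ζ lam d) ∧
        (∑ i, ∑ v ∈ P i, (((G.neighborFinset v ∩ S).card : ℝ) -
            ((G.neighborFinset v ∩ P i).card : ℝ)))
          ≤ 2 * ((t : ℝ) - 1) * (lam * d ^ 2) := by
  intro n
  induction n with
  | zero =>
    intro S hS0 hSc
    exfalso
    have : S.card = 0 := Nat.le_zero.1 hS0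
    rw [this] at hSc
    push_cast at hSc
    linarith
  | succ n ih =>
    intro S hScard hSc
    by_cases hwc : WellConnected (indSub G S).coe ζ lam d
    · refine ⟨1, fun _ => S, ?_, ?_, fun _ => hSc, fun _ => hwc, ?_⟩
      · intro i j hij
        exact absurd (Subsingleton.elim i j) hij
      · simp
      · simp
    · obtain ⟨S₁, S₂, hdis, hun, hc₁, hc₂, hcut⟩ := split_lemma G ζ lam d hζd S hwc
      have hS₁pos : 0 < S₁.card := by
        have : (0 : ℝ) < (S₁.card : ℝ) := lt_of_lt_of_le hζd hc₁
        exact_mod_cast this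
      have hS₂pos : 0 < S₂.card := by
        have : (0 : ℝ) < (S₂.card : ℝ) := lt_of_lt_of_le hζd hc₂
        exact_mod_cast this
      have hcards : S₁.card + S₂.card = S.card := by
        rw [← hun, Finset.card_union_of_disjoint hdis]
      obtain ⟨t₁, P₁, hd₁, hu₁, hs₁, hw₁, hsum₁⟩ := ih S₁ (by omega) hc₁
      obtain ⟨t₂, P₂, hd₂, hu₂, hs₂, hw₂, hsum₂⟩ := ih S₂ (by omega) hc₂
      have hP₁sub : ∀ i, P₁ i ⊆ S₁ := fun i =>
        hu₁ ▸ Finset.subset_biUnion_of_mem P₁ (Finset.mem_univ i)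
      have hP₂sub : ∀ i, P₂ i ⊆ S₂ := fun i =>
        hu₂ ▸ Finset.subset_biUnion_of_mem P₂ (Finset.mem_univ i)
      refine ⟨t₁ + t₂, Fin.addCases P₁ P₂, ?_, ?_, ?_, ?_, ?_⟩
      · intro i j
        induction i using Fin.addCases with
        | left i₁ =>
          induction j using Fin.addCases with
          | left j₁ =>
            intro hij
            simp only [Fin.addCases_left]
            exact hd₁ i₁ j₁ (fun h => hij (congrArg _ h))
          | right j₂ =>
            intro _
            simp only [Fin.addCases_left, Fin.addCases_right]
            exact Finset.disjoint_of_subset_left (hP₁sub i₁)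
              (Finset.disjoint_of_subset_right (hP₂sub j₂) hdis)
        | right i₂ =>
          induction j using Fin.addCases with
          | left j₁ =>
            intro _
            simp only [Fin.addCases_left, Fin.addCases_right]
            exact Finset.disjoint_of_subset_left (hP₂sub i₂)
              (Finset.disjoint_of_subset_right (hP₁sub j₁) hdis.symm)
          | right j₂ =>
            intro hij
            simp only [Fin.addCases_right]
            exact hd₂ i₂ j₂ (fun h => hij (congrArg _ h))
      · ext x
        simp only [Finset.mem_biUnion, Finset.mem_univ, true_and]
        constructor
        · rintro ⟨i, hi⟩
          induction i using Fin.addCases with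
          | left i₁ =>
            rw [Fin.addCases_left] at hi
            exact (hun ▸ Finset.mem_union_left _ (hP₁sub i₁ hi))
          | right i₂ =>
            rw [Fin.addCases_right] at hi
            exact (hun ▸ Finset.mem_union_right _ (hP₂sub i₂ hi))
        · intro hx
          rw [← hun] at hx
          rcases Finset.mem_union.1 hx with h | h
          · rw [← hu₁] at h
            obtain ⟨i, -, hi⟩ := Finset.mem_biUnion.1 h
            exact ⟨Fin.castAdd t₂ i, by rwa [Fin.addCases_left]⟩
          · rw [← hu₂] at h
            obtain ⟨i, -, hi⟩ := Finset.mem_biUnion.1 h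
            exact ⟨Fin.natAdd t₁ i, by rwa [Fin.addCases_right]⟩
      · intro i
        induction i using Fin.addCases with
        | left i₁ => simpa only [Fin.addCases_left] using hs₁ i₁
        | right i₂ => simpa only [Fin.addCases_right] using hs₂ i₂
      · intro i
        induction i using Fin.addCases with
        | left i₁ =>
          have h : (Fin.addCases P₁ P₂ (Fin.castAdd t₂ i₁) : Finset V) = P₁ i₁ :=
            Fin.addCases_left i₁
          beta_reduce
          rw [h]; exact hw₁ i₁
        | right i₂ =>
          have h : (Fin.addCases P₁ P₂ (Fin.natAdd t₁ i₂) : Finset V) = P₂ i₂ :=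
            Fin.addCases_right i₂
          beta_reduce
          rw [h]; exact hw₂ i₂
      · -- the loss sum
        have hsplitN : ∀ v : V, ((G.neighborFinset v ∩ S).card : ℝ) =
            ((G.neighborFinset v ∩ S₁).card : ℝ) + ((G.neighborFinset v ∩ S₂).card : ℝ) := by
          intro v
          rw [← hun, Finset.inter_union_distrib_left,
            Finset.card_union_of_disjoint
              (Finset.disjoint_of_subset_left Finset.inter_subset_right
                (Finset.disjoint_of_subset_right Finset.inter_subset_right hdis))]
          push_cast; ring
        have hpart₁ : ∑ i : Fin t₁, ∑ v ∈ P₁ i, ((G.neighborFinset v ∩ S₂).card : ℝ) =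
            ∑ v ∈ S₁, ((G.neighborFinset v ∩ S₂).card : ℝ) := by
          rw [← hu₁]
          exact (Finset.sum_biUnion (fun i _ j _ hij => hd₁ i j hij)).symm
        have hpart₂ : ∑ i : Fin t₂, ∑ v ∈ P₂ i, ((G.neighborFinset v ∩ S₁).card : ℝ) =
            ∑ v ∈ S₂, ((G.neighborFinset v ∩ S₁).card : ℝ) := by
          rw [← hu₂]
          exact (Finset.sum_biUnion (fun i _ j _ hij => hd₂ i j hij)).symm
        rw [Fin.sum_univ_add]
        simp only [Fin.addCases_left, Fin.addCases_right]
        have h₁ : ∑ i : Fin t₁, ∑ v ∈ P₁ i,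
            (((G.neighborFinset v ∩ S).card : ℝ) - ((G.neighborFinset v ∩ P₁ i).card : ℝ)) =
            (∑ i : Fin t₁, ∑ v ∈ P₁ i,
              (((G.neighborFinset v ∩ S₁).card : ℝ) - ((G.neighborFinset v ∩ P₁ i).card : ℝ))) +
            ∑ i : Fin t₁, ∑ v ∈ P₁ i, ((G.neighborFinset v ∩ S₂).card : ℝ) := by
          rw [← Finset.sum_add_distrib]
          refine Finset.sum_congr rfl fun i _ => ?_
          rw [← Finset.sum_add_distrib]
          refine Finset.sum_congr rfl fun v _ => ?_
          rw [hsplitN v]; ring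
        have h₂ : ∑ i : Fin t₂, ∑ v ∈ P₂ i,
            (((G.neighborFinset v ∩ S).card : ℝ) - ((G.neighborFinset v ∩ P₂ i).card : ℝ)) =
            (∑ i : Fin t₂, ∑ v ∈ P₂ i,
              (((G.neighborFinset v ∩ S₂).card : ℝ) - ((G.neighborFinset v ∩ P₂ i).card : ℝ))) +
            ∑ i : Fin t₂, ∑ v ∈ P₂ i, ((G.neighborFinset v ∩ S₁).card : ℝ) := by
          rw [← Finset.sum_add_distrib]
          refine Finset.sum_congr rfl fun i _ => ?_
          rw [← Finset.sum_add_distrib]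
          refine Finset.sum_congr rfl fun v _ => ?_
          rw [hsplitN v]; ring
        rw [h₁, h₂, hpart₁, hpart₂]
        have hring : 2 * ((t₁ : ℝ) - 1) * (lam * d ^ 2) + 2 * ((t₂ : ℝ) - 1) * (lam * d ^ 2)
            + 2 * (lam * d ^ 2) = 2 * (((t₁ + t₂ : ℕ) : ℝ) - 1) * (lam * d ^ 2) := by
          push_cast; ring
        linarith


end AuxLemmas

set_option maxHeartbeats 1600000

/-- Lemma 5.2. A `(β,d,K)`-dense graph can be partitioned (after setting
aside a small set `J`) into at most `2K` well-connected dense pieces. -/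
theorem partition_dense_graph_into_connected_pieces (K β : ℝ) (hK : 1 ≤ K)
    (hβ0 : 0 < β) (hβ1 : β ≤ 1 / 4) :
    ∃ lam₀ : ℝ, 0 < lam₀ ∧ ∀ lam : ℝ, 0 < lam → lam ≤ lam₀ →
      ∃ d₀ : ℕ, ∀ d : ℕ, d₀ ≤ d →
        ∀ (V : Type) [Fintype V] (G : SimpleGraph V),
          IsDenseGraph G β d K →
          ∃ (t : ℕ) (J : Finset V) (Gs : Fin t → G.Subgraph),
            ((t : ℝ) ≤ 2 * K) ∧
            (∀ i j, i ≠ j → Disjoint (Gs i).verts (Gs j).verts) ∧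
            ((⋃ i, (Gs i).verts) = Set.univ) ∧
            ((J.card : ℝ) ≤ Real.sqrt lam * d) ∧
            (∀ i, IsDenseSubgraph ((Gs i).deleteVerts (J : Set V)) (2 * β) d K) ∧
            (∀ i, WellConnected (Gs i).coe (lam ^ ((1 : ℝ) / 4)) lam d) := by
  have hK0 : (0 : ℝ) < K := lt_of_lt_of_le one_pos hK
  refine ⟨min (1/2) ((β / (3 * K)) ^ 4), by positivity, ?_⟩
  intro lam hlam hlamle
  refine ⟨1, ?_⟩
  intro d hd Vt _ G hG
  obtain ⟨hV0, hVK, hdeg⟩ := hG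
  set x : ℝ := lam ^ ((1 : ℝ) / 4) with hxdef
  set dR : ℝ := (d : ℝ) with hdR
  have hdR1 : (1 : ℝ) ≤ dR := by rw [hdR]; exact_mod_cast hd
  have hdR0 : (0 : ℝ) < dR := lt_of_lt_of_le one_pos hdR1
  have hx0 : 0 < x := Real.rpow_pos_of_pos hlam _
  have hx4 : x ^ (4 : ℕ) = lam := by
    rw [hxdef, ← Real.rpow_natCast (lam ^ ((1:ℝ)/4)) 4, ← Real.rpow_mul hlam.le]
    norm_num
  have hxβ : x ≤ β / (3 * K) := by
    have h1 : lam ≤ (β / (3 * K)) ^ 4 := le_trans hlamle (min_le_right _ _)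
    have h2 : x ≤ ((β / (3 * K)) ^ 4) ^ ((1:ℝ)/4) :=
      Real.rpow_le_rpow hlam.le h1 (by norm_num)
    have h3 : ((β / (3 * K)) ^ 4) ^ ((1:ℝ)/4) = β / (3 * K) := by
      rw [← Real.rpow_natCast (β / (3 * K)) 4, ← Real.rpow_mul (by positivity)]
      norm_num
    rw [h3] at h2
    exact h2
  have hβK : β / (3 * K) ≤ β / 3 := by
    apply div_le_div_of_nonneg_left hβ0.le (by norm_num)
    linarith
  have hx12 : x ≤ 1 / 12 := by
    have : β / 3 ≤ 1 / 12 := by linarith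
    linarith [hxβ.trans hβK]
  have hsqrt : Real.sqrt lam = x ^ 2 := by
    rw [show lam = (x ^ 2) ^ 2 by rw [← hx4]; ring]
    exact Real.sqrt_sq (by positivity)
  -- apply lemA
  have hζd : 0 < x * dR := by positivity
  have hlamd : 0 ≤ lam * dR ^ 2 := by positivity
  have hcardV : x * dR ≤ ((Finset.univ : Finset Vt).card : ℝ) := by
    obtain ⟨v⟩ := Fintype.card_pos_iff.1 hV0
    have h1 : (1 - β) * dR ≤ (G.degree v : ℝ) := hdeg v
    have h2 : G.degree v < Fintype.card Vt := G.degree_lt_card_verts v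
    have h3 : ((Fintype.card Vt : ℕ) : ℝ) = ((Finset.univ : Finset Vt).card : ℝ) := by
      rw [Finset.card_univ]
    have h4 : (G.degree v : ℝ) < (Fintype.card Vt : ℝ) := by exact_mod_cast h2
    rw [← h3]
    nlinarith
  obtain ⟨t, P, hPd, hPu, hPs, hPw, hPsum⟩ :=
    lemA G x lam dR hζd hlamd (Finset.univ : Finset Vt).card Finset.univ le_rfl hcardV
  -- rewrite the loss sum using degrees
  have hPsum' : ∑ i, ∑ v ∈ P i, ((G.degree v : ℝ) - ((G.neighborFinset v ∩ P i).card : ℝ))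
      ≤ 2 * ((t : ℝ) - 1) * (lam * dR ^ 2) := by
    simp only [Finset.inter_univ, SimpleGraph.card_neighborFinset_eq_degree] at hPsum
    exact hPsum
  -- sum of part sizes equals number of vertices
  have hsumcard : ∑ i, (((P i).card : ℕ) : ℝ) = ((Fintype.card Vt : ℕ) : ℝ) := by
    have h1 : ∑ i, (P i).card = (Finset.univ.biUnion P).card :=
      (Finset.card_biUnion (fun i _ j _ hij => hPd i j hij)).symm
    rw [hPu, Finset.card_univ] at h1
    exact_mod_cast congrArg (Nat.cast : ℕ → ℝ) h1
  have hnVK : ((Fintype.card Vt : ℕ) : ℝ) ≤ K * dR := hVK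
  -- bound on t : t * x ≤ K
  have htx : (t : ℝ) * x * dR ≤ K * dR := by
    have h1 : ∑ i : Fin t, (x * dR) ≤ ∑ i, (((P i).card : ℕ) : ℝ) :=
      Finset.sum_le_sum (fun i _ => hPs i)
    rw [Finset.sum_const, Finset.card_univ, Fintype.card_fin, nsmul_eq_mul] at h1
    calc (t : ℝ) * x * dR = (t : ℝ) * (x * dR) := by ring
      _ ≤ ((Fintype.card Vt : ℕ) : ℝ) := by rw [← hsumcard]; exact h1
      _ ≤ K * dR := hnVK
  -- define the bad set J
  set lossF : Fin t → Vt → ℝ := fun i v => (G.degree v : ℝ) - ((G.neighborFinset v ∩ P i).card : ℝ)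
    with hlossF
  set τ : ℝ := 2 * K * x with hτ
  have hτ0 : 0 < τ * dR := by positivity
  set J : Finset Vt := Finset.univ.biUnion
      (fun i => (P i).filter (fun v => τ * dR < lossF i v)) with hJ
  have hlossnn : ∀ (i : Fin t) (v : Vt), 0 ≤ lossF i v := by
    intro i v
    have : (G.neighborFinset v ∩ P i).card ≤ G.degree v :=
      Finset.card_le_card Finset.inter_subset_left
    have := (Nat.cast_le (α := ℝ)).2 this
    simp only [hlossF]
    linarith
  have hJcard : (J.card : ℝ) * (τ * dR) ≤ 2 * ((t : ℝ) - 1) * (lam * dR ^ 2) := by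
    have h1 : (J.card : ℝ) ≤ ∑ i, (((P i).filter (fun v => τ * dR < lossF i v)).card : ℝ) := by
      have := Finset.card_biUnion_le (s := (Finset.univ : Finset (Fin t)))
        (t := fun i => (P i).filter (fun v => τ * dR < lossF i v))
      rw [← hJ] at this
      exact_mod_cast this
    have h2 : ∀ i : Fin t, (((P i).filter (fun v => τ * dR < lossF i v)).card : ℝ) * (τ * dR)
        ≤ ∑ v ∈ P i, lossF i v := by
      intro i
      have ha : ∑ v ∈ (P i).filter (fun v => τ * dR < lossF i v), (τ * dR)
          ≤ ∑ v ∈ (P i).filter (fun v => τ * dR < lossF i v), lossF i v :=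
        Finset.sum_le_sum (fun v hv => (Finset.mem_filter.1 hv).2.le)
      have hb : ∑ v ∈ (P i).filter (fun v => τ * dR < lossF i v), lossF i v
          ≤ ∑ v ∈ P i, lossF i v :=
        Finset.sum_le_sum_of_subset_of_nonneg (Finset.filter_subset _ _)
          (fun v hv _ => hlossnn i v)
      rw [Finset.sum_const, nsmul_eq_mul] at ha
      linarith
    calc (J.card : ℝ) * (τ * dR)
        ≤ (∑ i, (((P i).filter (fun v => τ * dR < lossF i v)).card : ℝ)) * (τ * dR) := by
          exact mul_le_mul_of_nonneg_right h1 hτ0.le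
      _ = ∑ i, (((P i).filter (fun v => τ * dR < lossF i v)).card : ℝ) * (τ * dR) := by
          rw [Finset.sum_mul]
      _ ≤ ∑ i, ∑ v ∈ P i, lossF i v := Finset.sum_le_sum (fun i _ => h2 i)
      _ ≤ 2 * ((t : ℝ) - 1) * (lam * dR ^ 2) := hPsum'
  have hJx : (J.card : ℝ) ≤ x ^ 2 * dR := by
    have h0 : 2 * ((t : ℝ) - 1) * (lam * dR ^ 2) ≤ 2 * K * x ^ 3 * dR ^ 2 := by
      have h1 : (t : ℝ) * x ≤ K := by nlinarith [htx]
      have ha : (t : ℝ) * x ^ 4 ≤ K * x ^ 3 := by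
        nlinarith [mul_le_mul_of_nonneg_right h1 (pow_nonneg hx0.le 3)]
      have hb : (t : ℝ) * x ^ 4 * dR ^ 2 ≤ K * x ^ 3 * dR ^ 2 :=
        mul_le_mul_of_nonneg_right ha (sq_nonneg dR)
      have hc : (0 : ℝ) ≤ x ^ 4 * dR ^ 2 := by positivity
      rw [← hx4]
      nlinarith [hb, hc]
    have h3 : (J.card : ℝ) * (τ * dR) ≤ 2 * K * x ^ 3 * dR ^ 2 := le_trans hJcard h0
    rw [hτ] at h3
    have h4 : (0 : ℝ) < 2 * K * x * dR := by positivity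
    rw [← mul_le_mul_iff_of_pos_right h4, show x ^ 2 * dR * (2 * K * x * dR) = 2 * K * x ^ 3 * dR ^ 2 by ring]
    exact h3
  -- vertices not in J have small loss
  have hJmem : ∀ (v : Vt), v ∉ J → ∀ i, v ∈ P i → lossF i v ≤ τ * dR := by
    intro v hv i hvi
    by_contra h
    push_neg at h
    exact hv (Finset.mem_biUnion.2 ⟨i, Finset.mem_univ i, Finset.mem_filter.2 ⟨hvi, h⟩⟩)
  have hinter : ∀ (i : Fin t) (v : Vt),
      G.neighborFinset v ∩ (P i \ J) = (G.neighborFinset v ∩ P i) \ J := by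
    intro i v
    ext w
    simp only [Finset.mem_inter, Finset.mem_sdiff]
    tauto
  have hx2 : x ^ 2 ≤ x := by nlinarith [hx12, hx0.le]
  have hβx : 2 * K * x + x ^ 2 ≤ β := by
    have hb1 : 2 * K * x ≤ 2 * β / 3 := by
      have := mul_le_mul_of_nonneg_left hxβ (by positivity : (0:ℝ) ≤ 2 * K)
      calc 2 * K * x ≤ 2 * K * (β / (3 * K)) := this
        _ = 2 * β / 3 := by field_simp
    have hb2 : x ≤ β / 3 := hxβ.trans hβK
    linarith [hx2.trans hb2]
  have hdense : ∀ i, ∀ v ∈ P i \ J,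
      (1 - 2 * β) * dR ≤ ((G.neighborFinset v ∩ (P i \ J)).card : ℝ) := by
    intro i v hv
    obtain ⟨hvP, hvJ⟩ := Finset.mem_sdiff.1 hv
    have hl : lossF i v ≤ τ * dR := hJmem v hvJ i hvP
    have h1 : (G.degree v : ℝ) - τ * dR ≤ ((G.neighborFinset v ∩ P i).card : ℝ) := by
      simp only [hlossF] at hl
      linarith
    have h2 : ((G.neighborFinset v ∩ P i).card : ℝ)
        ≤ ((G.neighborFinset v ∩ (P i \ J)).card : ℝ) + (J.card : ℝ) := by
      rw [hinter i v]
      exact_mod_cast Finset.card_le_card_sdiff_add_card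
        (s := G.neighborFinset v ∩ P i) (t := J)
    have h3 := hdeg v
    have h4 : (2 * K * x + x ^ 2) * dR ≤ β * dR := mul_le_mul_of_nonneg_right hβx hdR0.le
    rw [hτ] at h1
    linarith [hJx]
  have hne : ∀ i, (P i \ J).Nonempty := by
    intro i
    have hcard : ((P i).card : ℝ) ≤ ((P i \ J).card : ℝ) + (J.card : ℝ) :=
      by exact_mod_cast Finset.card_le_card_sdiff_add_card (s := P i) (t := J)
    have hx2' : x ^ 2 < x := by nlinarith [hx0, hx12]
    have hpos : (0 : ℝ) < (((P i \ J).card : ℕ) : ℝ) := by nlinarith [hPs i, hJx, hdR0]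
    exact Finset.card_pos.1 (by exact_mod_cast hpos)
  have htb : (t : ℝ) ≤ 2 * K := by
    have hbig : ∀ i : Fin t, dR / 2 ≤ (((P i).card : ℕ) : ℝ) := by
      intro i
      obtain ⟨v, hv⟩ := hne i
      have h1 := hdense i v hv
      have hvP : v ∈ P i := (Finset.mem_sdiff.1 hv).1
      have hsub : G.neighborFinset v ∩ (P i \ J) ⊆ (P i).erase v := by
        intro w hw
        obtain ⟨hw1, hw2⟩ := Finset.mem_inter.1 hw
        refine Finset.mem_erase.2 ⟨?_, (Finset.mem_sdiff.1 hw2).1⟩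
        rintro rfl
        exact G.irrefl ((SimpleGraph.mem_neighborFinset G _ _).1 hw1)
      have h5 : 1 ≤ (P i).card := Finset.card_pos.2 ⟨v, hvP⟩
      have h2 : ((G.neighborFinset v ∩ (P i \ J)).card : ℝ) ≤ ((P i).card : ℝ) - 1 := by
        have h6 := Finset.card_le_card hsub
        rw [Finset.card_erase_of_mem hvP] at h6
        have h7 : ((G.neighborFinset v ∩ (P i \ J)).card : ℝ) ≤ (((P i).card - 1 : ℕ) : ℝ) := by
          exact_mod_cast h6
        rwa [Nat.cast_sub h5, Nat.cast_one] at h7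
      nlinarith [h1, h2, hdR0]
    have hsum2 : (t : ℝ) * (dR / 2) ≤ K * dR := by
      have h1 : ∑ _i : Fin t, (dR / 2) ≤ ∑ i, (((P i).card : ℕ) : ℝ) :=
        Finset.sum_le_sum (fun i _ => hbig i)
      rw [Finset.sum_const, Finset.card_univ, Fintype.card_fin, nsmul_eq_mul] at h1
      rw [hsumcard] at h1
      linarith [hnVK]
    nlinarith [hsum2, hdR0]
  clear hJmem hJcard hJ
  clear_value J
  refine ⟨t, J, fun i => indSub G (P i), htb, ?_, ?_, ?_, ?_, fun i => hPw i⟩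
  · intro i j hij
    have : (indSub G (P i)).verts = ((P i : Finset Vt) : Set Vt) := rfl
    simp only [indSub, SimpleGraph.Subgraph.induce_verts]
    exact Finset.disjoint_coe.2 (hPd i j hij)
  · ext v
    simp only [Set.mem_iUnion, Set.mem_univ, iff_true]
    have hv : v ∈ Finset.univ.biUnion P := hPu ▸ Finset.mem_univ v
    obtain ⟨i, -, hi⟩ := Finset.mem_biUnion.1 hv
    exact ⟨i, hi⟩
  · rw [hsqrt]
    exact hJx
  · intro i
    have hverts : ((indSub G (P i)).deleteVerts (J : Set Vt)).verts
        = ((P i \ J : Finset Vt) : Set Vt) := by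
      simp only [indSub, SimpleGraph.Subgraph.deleteVerts_verts,
        SimpleGraph.Subgraph.induce_verts, Finset.coe_sdiff]
    refine ⟨?_, ?_, ?_⟩
    · rw [hverts]
      exact Finset.coe_nonempty.2 (hne i)
    · rw [hverts, Set.ncard_coe_finset]
      calc (((P i \ J).card : ℕ) : ℝ) ≤ ((Fintype.card Vt : ℕ) : ℝ) := by
            exact_mod_cast Finset.card_le_univ _
        _ ≤ K * dR := hnVK
    · intro v hv
      rw [hverts] at hv
      have hv' : v ∈ P i \ J := Finset.mem_coe.1 hv
      have hnb : ((indSub G (P i)).deleteVerts (J : Set Vt)).neighborSet v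
          = ((G.neighborFinset v ∩ (P i \ J) : Finset Vt) : Set Vt) := by
        obtain ⟨hvP, hvJ⟩ := Finset.mem_sdiff.1 hv'
        ext w
        simp only [SimpleGraph.Subgraph.mem_neighborSet,
          SimpleGraph.Subgraph.deleteVerts_adj, indSub,
          SimpleGraph.Subgraph.induce_verts, SimpleGraph.Subgraph.induce_adj,
          SimpleGraph.Subgraph.top_adj, Set.mem_diff, Finset.mem_coe, Finset.mem_inter,
          Finset.mem_sdiff, SimpleGraph.mem_neighborFinset, Set.mem_setOf_eq]
        tauto
      rw [hnb, Set.ncard_coe_finset]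
      have := hdense i v hv'
      linarith


end
end

section
/- Let d ≥ 1, let 0 < ζ, λ ≤ 1, and let K ≥ 1. Let G be a (ζ,λ,d)-connected graph with at most K·d vertices, and let U, V ⊆ V(G) be sets each of size at least ζ·d. Then G contains a path from U to V of length at most 8K/λ. -/
open SimpleGraph Finset
open scoped Classical symmDiff

noncomputable section

set_option maxHeartbeats 1000000 in
/-- Lemma 5.3. A `(ζ,λ,d)`-connected graph on at most `K·d` vertices
contains, between any two vertex sets of size at least `ζ·d`, a path of length at most
`8K/λ`. -/
theorem short_path_between_large_sets (d ζ lam K : ℝ)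
    (hd : 1 ≤ d) (hζ0 : 0 < ζ) (hζ1 : ζ ≤ 1) (hlam0 : 0 < lam) (hlam1 : lam ≤ 1) (hK : 1 ≤ K) :
    ∀ (Vt : Type) [Fintype Vt] (G : SimpleGraph Vt),
      WellConnected G ζ lam d →
      ((Fintype.card Vt : ℝ) ≤ K * d) →
      ∀ U W : Finset Vt, ζ * d ≤ (U.card : ℝ) → ζ * d ≤ (W.card : ℝ) →
        ∃ u ∈ U, ∃ w ∈ W, ∃ p : G.Walk u w, p.IsPath ∧ (p.length : ℝ) ≤ 8 * K / lam := by
  intro Vt _ G hWC hcard U W hU hW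
  by_contra hno
  push_neg at hno
  -- basic numeric facts
  set m : ℕ := ⌈3 * K / lam⌉₊ with hm
  have hlamne : lam ≠ 0 := ne_of_gt hlam0
  have hm0 : 0 < m := Nat.ceil_pos.mpr (by positivity)
  have hmge : 3 * K / lam ≤ (m : ℝ) := Nat.le_ceil _
  have hmlt : (m : ℝ) < 3 * K / lam + 1 := Nat.ceil_lt_add_one (by positivity)
  have hq : 3 * K / lam * lam = 3 * K := div_mul_cancel₀ _ hlamne
  have hml : 3 * K ≤ (m : ℝ) * lam := by
    have := mul_le_mul_of_nonneg_right hmge hlam0.le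
    rwa [hq] at this
  have h2m : (2 * m : ℝ) ≤ 8 * K / lam := by
    rw [le_div_iff₀ hlam0]
    have := mul_lt_mul_of_pos_right hmlt hlam0
    rw [add_mul, hq, one_mul] at this
    nlinarith
  -- the balls around U
  let B : ℕ → Finset Vt := fun n =>
    Finset.univ.filter (fun v => ∃ u ∈ U, ∃ p : G.Walk u v, p.length ≤ n)
  have hmemB : ∀ n (v : Vt), v ∈ B n ↔ ∃ u ∈ U, ∃ p : G.Walk u v, p.length ≤ n := by
    intro n v; simp [B]
  have hBmono : ∀ i j, i ≤ j → B i ⊆ B j := by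
    intro i j hij v hv
    rw [hmemB] at hv ⊢
    obtain ⟨u, hu, p, hp⟩ := hv
    exact ⟨u, hu, p, hp.trans hij⟩
  have hBstep : ∀ n (v w : Vt), v ∈ B n → G.Adj v w → w ∈ B (n + 1) := by
    intro n v w hv hadj
    rw [hmemB] at hv ⊢
    obtain ⟨u, hu, p, hp⟩ := hv
    exact ⟨u, hu, p.concat hadj, by rw [SimpleGraph.Walk.length_concat]; omega⟩
  have hU0 : ∀ u ∈ U, u ∈ B 0 := by
    intro u hu
    rw [hmemB]
    exact ⟨u, hu, SimpleGraph.Walk.nil, le_refl 0⟩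
  have hWB : ∀ w ∈ W, w ∉ B (2 * m) := by
    intro w hw hwB
    rw [hmemB] at hwB
    obtain ⟨u, hu, p, hp⟩ := hwB
    have hlen : (p.bypass.length : ℝ) ≤ (2 * m : ℕ) := by
      exact_mod_cast (p.length_bypass_le.trans hp)
    have := hno u hu w hw p.bypass p.bypass_isPath
    push_cast at hlen
    linarith
  -- telescoping sum and averaging
  have htel : ∑ t ∈ Finset.range m, (((B (2 * t + 2)).card : ℝ) - ((B (2 * t)).card : ℝ))
      = ((B (2 * m)).card : ℝ) - ((B 0).card : ℝ) := by
    have h := Finset.sum_range_sub (f := fun t => ((B (2 * t)).card : ℝ)) m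
    have h2 : ∀ t : ℕ, 2 * (t + 1) = 2 * t + 2 := by omega
    simp only [h2] at h
    exact h
  have hsum_le : ∑ t ∈ Finset.range m, (((B (2 * t + 2)).card : ℝ) - ((B (2 * t)).card : ℝ))
      ≤ K * d := by
    rw [htel]
    have h1 : ((B (2 * m)).card : ℝ) ≤ K * d := by
      refine le_trans ?_ hcard
      exact_mod_cast Finset.card_le_univ (B (2 * m))
    have h2 : (0 : ℝ) ≤ ((B 0).card : ℝ) := by positivity
    linarith
  obtain ⟨t, htm, hts⟩ :
      ∃ t, t < m ∧ (((B (2 * t + 2)).card : ℝ) - ((B (2 * t)).card : ℝ)) ≤ K * d / m := by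
    by_contra hc
    push_neg at hc
    have hlt : ∑ t ∈ Finset.range m, (K * d / m)
        < ∑ t ∈ Finset.range m, (((B (2 * t + 2)).card : ℝ) - ((B (2 * t)).card : ℝ)) := by
      refine Finset.sum_lt_sum_of_nonempty ⟨0, Finset.mem_range.mpr hm0⟩ ?_
      intro i hi
      exact hc i (Finset.mem_range.mp hi)
    rw [Finset.sum_const, Finset.card_range, nsmul_eq_mul] at hlt
    have hmne : (m : ℝ) ≠ 0 := Nat.cast_ne_zero.mpr hm0.ne'
    rw [mul_div_cancel₀ _ hmne] at hlt
    linarith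
  -- the two consecutive small spheres
  set S : Finset Vt := B (2 * t + 1) \ B (2 * t) with hS
  set T : Finset Vt := B (2 * t + 2) \ B (2 * t + 1) with hT
  have hScard : (S.card : ℝ) = ((B (2 * t + 1)).card : ℝ) - ((B (2 * t)).card : ℝ) := by
    rw [hS, Finset.card_sdiff_of_subset (hBmono _ _ (by omega))]
    rw [Nat.cast_sub (Finset.card_le_card (hBmono _ _ (by omega)))]
  have hTcard : (T.card : ℝ) = ((B (2 * t + 2)).card : ℝ) - ((B (2 * t + 1)).card : ℝ) := by
    rw [hT, Finset.card_sdiff_of_subset (hBmono _ _ (by omega))]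
    rw [Nat.cast_sub (Finset.card_le_card (hBmono _ _ (by omega)))]
  have hsum : (S.card : ℝ) + (T.card : ℝ) ≤ K * d / m := by
    rw [hScard, hTcard]; linarith
  have hKdm : K * d / m ≤ lam * d / 3 := by
    rw [div_le_div_iff₀ (by exact_mod_cast hm0) (by norm_num : (0:ℝ) < 3)]
    nlinarith
  -- the cut edge set
  set F : Finset (Sym2 Vt) :=
    ((S ×ˢ T).image (fun p : Vt × Vt => s(p.1, p.2))).filter (· ∈ G.edgeSet) with hF
  have hFcard : (F.card : ℝ) ≤ (S.card : ℝ) * (T.card : ℝ) := by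
    have h1 : F.card ≤ S.card * T.card := by
      calc F.card ≤ ((S ×ˢ T).image (fun p : Vt × Vt => s(p.1, p.2))).card :=
            Finset.card_filter_le _ _
        _ ≤ (S ×ˢ T).card := Finset.card_image_le
        _ = S.card * T.card := Finset.card_product S T
    exact_mod_cast h1
  have hFlam : (F.card : ℝ) ≤ lam * d ^ 2 := by
    have ha : (0 : ℝ) ≤ (S.card : ℝ) := Nat.cast_nonneg _
    have hb : (0 : ℝ) ≤ (T.card : ℝ) := Nat.cast_nonneg _
    have hab : (S.card : ℝ) + (T.card : ℝ) ≤ lam * d / 3 := hsum.trans hKdm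
    have hST : (S.card : ℝ) * (T.card : ℝ) ≤ lam * d ^ 2 := by
      nlinarith [sq_nonneg ((S.card : ℝ) - (T.card : ℝ))]
    linarith
  have hFsub : (↑F : Set (Sym2 Vt)) ⊆ G.edgeSet := by
    intro e he
    rw [Finset.mem_coe, hF, Finset.mem_filter] at he
    exact he.2
  have hcut : ∀ v w : Vt, v ∈ B (2 * t + 1) → w ∉ B (2 * t + 1) → G.Adj v w → s(v, w) ∈ F := by
    intro v w hv hw hadj
    have hvS : v ∈ S := by
      rw [hS, Finset.mem_sdiff]
      refine ⟨hv, fun hv2 => hw (hBstep _ _ _ hv2 hadj)⟩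
    have hwT : w ∈ T := by
      rw [hT, Finset.mem_sdiff]
      exact ⟨hBstep _ _ _ hv hadj, hw⟩
    rw [hF, Finset.mem_filter]
    refine ⟨Finset.mem_image.mpr ⟨(v, w), Finset.mem_product.mpr ⟨hvS, hwT⟩, rfl⟩, ?_⟩
    exact hadj
  -- apply well-connectedness
  obtain ⟨a, ha, b, hb, p, hp⟩ :=
    hWC (↑U) (↑W) (by rwa [Set.ncard_coe_finset]) (by rwa [Set.ncard_coe_finset])
      (↑F) hFsub (by rwa [Set.ncard_coe_finset])
  -- the path cannot escape B (2t+1)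
  have hstay : ∀ {x y : Vt} (q : (G.deleteEdges (↑F : Set (Sym2 Vt))).Walk x y),
      x ∈ B (2 * t + 1) → y ∈ B (2 * t + 1) := by
    intro x y q
    induction q with
    | nil => exact id
    | @cons u v w hadj q ih =>
      intro hx
      rw [SimpleGraph.deleteEdges_adj] at hadj
      obtain ⟨hG, hnF⟩ := hadj
      by_cases hv : v ∈ B (2 * t + 1)
      · exact ih hv
      · exact absurd (hcut u v hx hv hG) (by simpa using hnF)
  have haB : a ∈ B (2 * t + 1) := hBmono 0 (2 * t + 1) (by omega) (hU0 a ha)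
  have hbB : b ∈ B (2 * t + 1) := hstay p haB
  have hbB2 : b ∈ B (2 * m) := hBmono (2 * t + 1) (2 * m) (by omega) hbB
  exact hWB b hb hbB2

end
end

section
/- Let d ≥ 1, let 0 < ζ, λ ≤ 1, and let K ≥ 1. Let G be a (ζ,λ,d)-connected graph with at most K·d vertices, and let U, V ⊆ V(G) be sets each of size at least ζ·d. Then G contains at least λ²d²/(32K) pairwise edge-disjoint paths from U to V, each of length at most 16K/λ. -/
open SimpleGraph Finset
open scoped Classical symmDiff

noncomputable section

section AuxLemmas

variable {Vt : Type} {G : SimpleGraph Vt}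

lemma pathListEdges_cons (P : GraphPath G) (l : List (GraphPath G)) :
    pathListEdges (P :: l) = P.edgeFinset ∪ pathListEdges l := rfl

lemma pathListEdges_subset (l : List (GraphPath G)) :
    (↑(pathListEdges l) : Set (Sym2 Vt)) ⊆ G.edgeSet := by
  induction l with
  | nil => simp [pathListEdges]
  | cons P l ih =>
    intro e he
    rw [pathListEdges_cons, Finset.coe_union, Set.mem_union] at he
    rcases he with h | h
    · exact P.walk.edges_subset_edgeSet (by simpa [GraphPath.edgeFinset] using h)
    · exact ih h

lemma edgeFinset_subset_pathListEdges {l : List (GraphPath G)} {Q : GraphPath G}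
    (hQ : Q ∈ l) : Q.edgeFinset ⊆ pathListEdges l := by
  induction l with
  | nil => simp at hQ
  | cons P l ih =>
    rw [pathListEdges_cons]
    rcases List.mem_cons.1 hQ with rfl | hQ
    · exact Finset.subset_union_left
    · exact (ih hQ).trans Finset.subset_union_right

lemma pathListEdges_card_le (l : List (GraphPath G)) (n : ℕ)
    (h : ∀ P ∈ l, P.walk.length ≤ n) :
    (pathListEdges l).card ≤ l.length * n := by
  induction l with
  | nil => simp [pathListEdges]
  | cons P l ih =>
    rw [pathListEdges_cons]
    have h1 : P.edgeFinset.card ≤ n := by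
      have := List.toFinset_card_le P.walk.edges
      have h2 := P.walk.length_edges
      have h3 := h P (by simp)
      simp only [GraphPath.edgeFinset]
      omega
    have h4 := ih (fun Q hQ => h Q (List.mem_cons_of_mem _ hQ))
    have := Finset.card_union_le P.edgeFinset (pathListEdges l)
    simp only [List.length_cons]
    calc (P.edgeFinset ∪ pathListEdges l).card
        ≤ P.edgeFinset.card + (pathListEdges l).card := Finset.card_union_le _ _
      _ ≤ n + l.length * n := Nat.add_le_add h1 h4
      _ = (l.length + 1) * n := by ring

lemma walk_stay {G' : SimpleGraph Vt} (S : Finset Vt)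
    (h : ∀ v w, G'.Adj v w → v ∈ S → w ∈ S) :
    ∀ {v w : Vt} (_ : G'.Walk v w), v ∈ S → w ∈ S := by
  intro v w q
  induction q with
  | nil => exact id
  | cons hadj q ih => exact fun hv => ih (h _ _ hadj hv)

end AuxLemmas

set_option maxHeartbeats 3200000 in
lemma exists_short_path (d ζ lam K : ℝ)
    (hd : 1 ≤ d) (hζ0 : 0 < ζ) (hlam0 : 0 < lam) (hlam1 : lam ≤ 1) (hK : 1 ≤ K)
    {Vt : Type} [Fintype Vt] {G : SimpleGraph Vt}
    (hconn : WellConnected G ζ lam d) (hcard : (Fintype.card Vt : ℝ) ≤ K * d)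
    (U W : Finset Vt) (hU : ζ * d ≤ (U.card : ℝ)) (hW : ζ * d ≤ (W.card : ℝ))
    (F : Finset (Sym2 Vt)) (hFsub : (↑F : Set (Sym2 Vt)) ⊆ G.edgeSet)
    (hFcard : (F.card : ℝ) ≤ lam * d ^ 2 / 2) :
    ∃ a ∈ U, ∃ b ∈ W, ∃ p : (G.deleteEdges (↑F : Set (Sym2 Vt))).Walk a b,
      p.IsPath ∧ p.length ≤ ⌊16 * K / lam⌋₊ := by
  classical
  have hd0 : (0:ℝ) < d := lt_of_lt_of_le one_pos hd
  have hK0 : (0:ℝ) < K := lt_of_lt_of_le one_pos hK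
  set H := G.deleteEdges (↑F : Set (Sym2 Vt)) with hH
  set n := ⌊16 * K / lam⌋₊ with hn
  set S : ℕ → Finset Vt := fun i =>
    Finset.univ.filter (fun v => ∃ u ∈ U, ∃ p : H.Walk u v, p.length ≤ i) with hSdef
  have memS : ∀ (i : ℕ) (v : Vt),
      v ∈ S i ↔ ∃ u ∈ U, ∃ p : H.Walk u v, p.length ≤ i := by
    intro i v
    simp only [hSdef, Finset.mem_filter, Finset.mem_univ, true_and]
  have hSmono : ∀ i j : ℕ, i ≤ j → S i ⊆ S j := by
    intro i j hij v hv
    rw [memS] at hv ⊢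
    obtain ⟨u, hu, p, hp⟩ := hv
    exact ⟨u, hu, p, hp.trans hij⟩
  by_cases hWS : ∃ b ∈ W, b ∈ S n
  · obtain ⟨b, hbW, hbS⟩ := hWS
    rw [memS] at hbS
    obtain ⟨u, hu, p, hp⟩ := hbS
    exact ⟨u, hu, b, hbW, p.bypass, p.bypass_isPath, le_trans p.length_bypass_le hp⟩
  · exfalso
    push_neg at hWS
    have h160 : (0:ℝ) ≤ 16 * K / lam := div_nonneg (by nlinarith) hlam0.le
    have hKl : (1:ℝ) ≤ K / lam := by
      rw [le_div_iff₀ hlam0]; nlinarith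
    have h16 : (16:ℝ) ≤ 16 * K / lam := by
      have : 16 * K / lam = 16 * (K / lam) := by ring
      rw [this]; nlinarith
    have hn16 : 16 ≤ n := Nat.le_floor (by exact_mod_cast h16)
    set m := n / 2 with hm
    have hmn : 2 * m ≤ n := by omega
    have hnle : (n : ℝ) ≤ 16 * K / lam := Nat.floor_le h160
    have hmge : 7 * K / lam ≤ (m : ℝ) := by
      have h1 : 16 * K / lam < (n:ℝ) + 1 := Nat.lt_floor_add_one _
      have h2 : (n : ℕ) ≤ 2 * m + 1 := by omega
      have h2' : (n : ℝ) ≤ 2 * (m:ℝ) + 1 := by exact_mod_cast h2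
      have e1 : 16 * K / lam = 16 * (K / lam) := by ring
      have e2 : 7 * K / lam = 7 * (K / lam) := by ring
      rw [e2]; rw [e1] at h1
      linarith
    have hm0R : (0:ℝ) < (m:ℝ) := by
      have : (0:ℝ) < 7 * K / lam := by positivity
      linarith
    have hm0 : 0 < m := by exact_mod_cast hm0R
    set L : ℕ → Finset Vt := fun i => S (i+1) \ S i with hLdef
    have hLdisj : ∀ i j : ℕ, i ≠ j → Disjoint (L i) (L j) := by
      have key : ∀ i j : ℕ, i < j → Disjoint (L i) (L j) := by
        intro i j hij
        refine Finset.disjoint_left.2 (fun v hvi hvj => ?_)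
        have h1 : v ∈ S (i+1) := (Finset.mem_sdiff.1 hvi).1
        have h2 : v ∉ S j := (Finset.mem_sdiff.1 hvj).2
        exact h2 (hSmono (i+1) j hij h1)
      intro i j hij
      rcases lt_or_gt_of_ne hij with h | h
      · exact key i j h
      · exact (key j i h).symm
    set B : ℕ → Finset Vt := fun t => L (2*t) ∪ L (2*t+1) with hBdef
    have hBdisj : ∀ s ∈ Finset.range m, ∀ t ∈ Finset.range m, s ≠ t →
        Disjoint (B s) (B t) := by
      intro s _ t _ hst
      simp only [hBdef, Finset.disjoint_union_left, Finset.disjoint_union_right]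
      exact ⟨⟨hLdisj _ _ (by omega), hLdisj _ _ (by omega)⟩,
             hLdisj _ _ (by omega), hLdisj _ _ (by omega)⟩
    have hsum : ∑ t ∈ Finset.range m, (B t).card ≤ Fintype.card Vt := by
      rw [← Finset.card_biUnion hBdisj]
      exact Finset.card_le_univ _
    have hex : ∃ t, t < m ∧ ((L (2*t)).card + (L (2*t+1)).card : ℝ) ≤ K * d / m := by
      by_contra hno
      push_neg at hno
      have hlt : ∀ t ∈ Finset.range m, K * d / m < ((B t).card : ℝ) := by
        intro t ht
        have h1 := hno t (Finset.mem_range.1 ht)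
        have hc : (B t).card = (L (2*t)).card + (L (2*t+1)).card :=
          Finset.card_union_of_disjoint (hLdisj _ _ (by omega))
        rw [hc]; push_cast; linarith
      have h1 : (m : ℝ) * (K * d / m) < ∑ t ∈ Finset.range m, ((B t).card : ℝ) := by
        calc (m:ℝ) * (K*d/m) = ∑ _t ∈ Finset.range m, (K*d/(m:ℝ)) := by
              rw [Finset.sum_const, Finset.card_range]; simp [nsmul_eq_mul]
          _ < _ := Finset.sum_lt_sum_of_nonempty ⟨0, Finset.mem_range.2 hm0⟩ hlt
      have h2 : ∑ t ∈ Finset.range m, ((B t).card : ℝ) ≤ K * d := by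
        have : ((∑ t ∈ Finset.range m, (B t).card : ℕ) : ℝ) ≤ (Fintype.card Vt : ℝ) := by
          exact_mod_cast hsum
        push_cast at this
        linarith
      have h3 : (m:ℝ) * (K * d / m) = K * d := by field_simp
      linarith
    obtain ⟨t, htm, hts⟩ := hex
    obtain ⟨a, b, hadef, hbdef⟩ : ∃ a b : ℝ, a = ((L (2*t)).card : ℝ) ∧ b = ((L (2*t+1)).card : ℝ) :=
      ⟨_, _, rfl, rfl⟩
    rw [← hadef, ← hbdef] at hts
    have ha0 : 0 ≤ a := hadef ▸ Nat.cast_nonneg _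
    have hb0 : 0 ≤ b := hbdef ▸ Nat.cast_nonneg _
    have hKdm : K * d / (m:ℝ) ≤ lam * d / 7 := by
      rw [div_le_iff₀ hm0R]
      have h7K : 7 * K ≤ (m:ℝ) * lam := by
        have := (div_le_iff₀ hlam0).1 hmge
        linarith
      have h7Kd : 7 * K * d ≤ (m:ℝ) * lam * d := mul_le_mul_of_nonneg_right h7K hd0.le
      linarith
    have hab : a * b ≤ lam * d ^ 2 / 2 - lam * d ^ 2 / 4 := by
      have hs : a + b ≤ lam * d / 7 := le_trans hts hKdm
      have h4 : 4 * (a * b) ≤ (a + b) ^ 2 := by nlinarith [sq_nonneg (a - b)]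
      have h5 : (a + b) ^ 2 ≤ (lam * d / 7) ^ 2 := by
        have := mul_self_le_mul_self (by linarith) hs
        simpa [sq] using this
      have h6 : lam ^ 2 * d ^ 2 ≤ lam * d ^ 2 := by
        have h7 : lam ^ 2 ≤ lam := by nlinarith
        have := mul_le_mul_of_nonneg_right h7 (sq_nonneg d)
        linarith
      have h8 : (lam * d / 7) ^ 2 = lam ^ 2 * d ^ 2 / 49 := by ring
      have h9 : 0 ≤ lam * d ^ 2 := mul_nonneg hlam0.le (sq_nonneg d)
      linarith
    set C : Finset (Sym2 Vt) :=
      ((L (2*t) ×ˢ L (2*t+1)).image (fun p => s(p.1, p.2))).filter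
        (fun e => e ∈ G.edgeSet) with hCdef
    have hCcard : (C.card : ℝ) ≤ a * b := by
      have h1 : C.card ≤ ((L (2*t) ×ˢ L (2*t+1)).image (fun p => s(p.1, p.2))).card :=
        Finset.card_filter_le _ _
      have h2 : ((L (2*t) ×ˢ L (2*t+1)).image (fun p => s(p.1, p.2))).card ≤
          (L (2*t) ×ˢ L (2*t+1)).card := Finset.card_image_le
      have h3 : (L (2*t) ×ˢ L (2*t+1)).card = (L (2*t)).card * (L (2*t+1)).card :=
        Finset.card_product _ _
      rw [hadef, hbdef]
      have h4 : C.card ≤ (L (2*t)).card * (L (2*t+1)).card := by omega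
      push_cast
      exact_mod_cast h4
    have hF'sub : (↑(F ∪ C) : Set (Sym2 Vt)) ⊆ G.edgeSet := by
      intro e he
      rw [Finset.coe_union, Set.mem_union] at he
      rcases he with h | h
      · exact hFsub h
      · have := Finset.mem_filter.1 (by exact_mod_cast h)
        exact this.2
    have hF'card : (((F ∪ C).card : ℕ) : ℝ) ≤ lam * d ^ 2 := by
      have h1 := Finset.card_union_le F C
      have h1' : (((F ∪ C).card : ℕ) : ℝ) ≤ (F.card : ℝ) + (C.card : ℝ) := by
        exact_mod_cast h1
      linarith
    obtain ⟨x, hxU, y, hyW, p, hp⟩ := hconn (↑U) (↑W)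
      (by rwa [Set.ncard_coe_finset]) (by rwa [Set.ncard_coe_finset])
      (↑(F ∪ C)) hF'sub (by rw [Set.ncard_coe_finset]; exact hF'card)
    set G' := G.deleteEdges (↑(F ∪ C) : Set (Sym2 Vt)) with hG'
    have hstep : ∀ v w : Vt, G'.Adj v w → v ∈ S (2*t+1) → w ∈ S (2*t+1) := by
      intro v w hadj hv
      by_contra hw
      rw [hG', SimpleGraph.deleteEdges_adj] at hadj
      obtain ⟨hGadj, hnotF'⟩ := hadj
      have hnotF : s(v,w) ∉ (↑F : Set (Sym2 Vt)) := by
        intro h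
        exact hnotF' (by rw [Finset.coe_union]; exact Set.mem_union_left _ h)
      have hHadj : H.Adj v w := SimpleGraph.deleteEdges_adj.2 ⟨hGadj, hnotF⟩
      have hext : ∀ (i : ℕ), v ∈ S i → w ∈ S (i+1) := by
        intro i hvi
        rw [memS] at hvi ⊢
        obtain ⟨u, hu, q, hq⟩ := hvi
        exact ⟨u, hu, q.concat hHadj, by rw [SimpleGraph.Walk.length_concat]; omega⟩
      have hw2 : w ∈ L (2*t+1) := Finset.mem_sdiff.2 ⟨hext _ hv, hw⟩
      have hv2 : v ∈ L (2*t) :=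
        Finset.mem_sdiff.2 ⟨hv, fun hvS => hw (hext _ hvS)⟩
      have hmemC : s(v,w) ∈ C := by
        rw [hCdef, Finset.mem_filter]
        exact ⟨Finset.mem_image.2 ⟨(v,w), Finset.mem_product.2 ⟨hv2, hw2⟩, rfl⟩, hGadj⟩
      exact hnotF' (by rw [Finset.coe_union]; exact Set.mem_union_right _ hmemC)
    have hxS : x ∈ S (2*t+1) := by
      rw [memS]
      exact ⟨x, hxU, SimpleGraph.Walk.nil, by simp⟩
    have hyS : y ∈ S (2*t+1) := walk_stay (S (2*t+1)) hstep p hxS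
    exact hWS y hyW (hSmono (2*t+1) n (by omega) hyS)

/-- Corollary 5.4. A `(ζ,λ,d)`-connected graph on at most `K·d` vertices
contains, between any two vertex sets of size at least `ζ·d`, at least `λ²d²/(32K)` pairwise
edge-disjoint paths, each of length at most `16K/λ`. -/
theorem many_short_edge_disjoint_paths_between_large_sets (d ζ lam K : ℝ)
    (hd : 1 ≤ d) (hζ0 : 0 < ζ) (hζ1 : ζ ≤ 1) (hlam0 : 0 < lam) (hlam1 : lam ≤ 1) (hK : 1 ≤ K) :
    ∀ (Vt : Type) [Fintype Vt] (G : SimpleGraph Vt),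
      WellConnected G ζ lam d →
      ((Fintype.card Vt : ℝ) ≤ K * d) →
      ∀ U W : Finset Vt, ζ * d ≤ (U.card : ℝ) → ζ * d ≤ (W.card : ℝ) →
        ∃ l : List (GraphPath G),
          EdgeDisjointPaths l ∧
          (lam ^ 2 * d ^ 2 / (32 * K) ≤ (l.length : ℝ)) ∧
          (∀ P ∈ l,
            ((P.a ∈ U ∧ P.b ∈ W) ∨ (P.a ∈ W ∧ P.b ∈ U)) ∧
            (P.walk.length : ℝ) ≤ 16 * K / lam) := by
  intro Vt _ G hconn hcard U W hU hW
  classical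
  have hd0 : (0:ℝ) < d := lt_of_lt_of_le one_pos hd
  have hK0 : (0:ℝ) < K := lt_of_lt_of_le one_pos hK
  have h160 : (0:ℝ) ≤ 16 * K / lam := div_nonneg (by nlinarith) hlam0.le
  have hx0 : (0:ℝ) ≤ lam ^ 2 * d ^ 2 / (32 * K) := div_nonneg (by positivity) (by nlinarith)
  set n := ⌊16 * K / lam⌋₊ with hn
  set N := ⌈lam ^ 2 * d ^ 2 / (32 * K)⌉₊ with hN
  have key : ∀ k : ℕ, k ≤ N → ∃ l : List (GraphPath G), l.length = k ∧
      EdgeDisjointPaths l ∧ ∀ P ∈ l, (P.a ∈ U ∧ P.b ∈ W) ∧ P.walk.length ≤ n := by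
    intro k
    induction k with
    | zero => exact fun _ => ⟨[], rfl, List.Pairwise.nil, by simp⟩
    | succ k ih =>
      intro hk
      obtain ⟨l, hlen, hdisj, hprop⟩ := ih (Nat.le_of_succ_le hk)
      set F := pathListEdges l with hF
      have hFsub : (↑F : Set (Sym2 Vt)) ⊆ G.edgeSet := pathListEdges_subset l
      have hFcard : (F.card : ℝ) ≤ lam * d ^ 2 / 2 := by
        have h1 : F.card ≤ l.length * n :=
          pathListEdges_card_le l n (fun P hP => (hprop P hP).2)
        rw [hlen] at h1
        have h2 : ((k:ℝ)) < lam ^ 2 * d ^ 2 / (32 * K) := by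
          have hc := Nat.ceil_lt_add_one hx0
          have hkN : (k:ℝ) + 1 ≤ (N:ℝ) := by exact_mod_cast hk
          rw [← hN] at hc
          linarith
        have h3 : (n:ℝ) ≤ 16 * K / lam := Nat.floor_le h160
        have h4 : (F.card : ℝ) ≤ (k:ℝ) * (n:ℝ) := by exact_mod_cast h1
        have h5 : (k:ℝ) * (n:ℝ) ≤ (lam ^ 2 * d ^ 2 / (32 * K)) * (16 * K / lam) :=
          mul_le_mul (le_of_lt h2) h3 (Nat.cast_nonneg _) hx0
        have h6 : (lam ^ 2 * d ^ 2 / (32 * K)) * (16 * K / lam) = lam * d ^ 2 / 2 := by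
          field_simp
          ring
        linarith
      obtain ⟨a, haU, b, hbW, p, hp, hplen⟩ :=
        exists_short_path d ζ lam K hd hζ0 hlam0 hlam1 hK hconn hcard U W hU hW
          F hFsub hFcard
      have hmem : ∀ e ∈ p.edges, e ∈ G.edgeSet := fun e he =>
        SimpleGraph.edgeSet_mono (SimpleGraph.deleteEdges_le _) (p.edges_subset_edgeSet he)
      refine ⟨⟨a, b, p.transfer G hmem, SimpleGraph.Walk.IsPath.transfer _ hp⟩ :: l,
        by simp [hlen], ?_, ?_⟩
      · refine List.Pairwise.cons (fun Q hQ => Finset.disjoint_left.2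
          (fun e heP heQ => ?_)) hdisj
        have heP' : e ∈ p.edges := by
          simpa [GraphPath.edgeFinset, SimpleGraph.Walk.edges_transfer] using heP
        have heF : e ∈ F := edgeFinset_subset_pathListEdges hQ heQ
        have := p.edges_subset_edgeSet heP'
        rw [SimpleGraph.edgeSet_deleteEdges, Set.mem_diff] at this
        exact this.2 (by exact_mod_cast heF)
      · intro Q hQ
        rcases List.mem_cons.1 hQ with rfl | hQ
        · refine ⟨⟨haU, hbW⟩, ?_⟩
          show (p.transfer G hmem).length ≤ n
          rw [SimpleGraph.Walk.length_transfer]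
          exact hplen
        · exact hprop Q hQ
  obtain ⟨l, hlen, hdisj, hprop⟩ := key N le_rfl
  refine ⟨l, hdisj, ?_, ?_⟩
  · rw [hlen]
    exact_mod_cast Nat.le_ceil _
  · intro P hP
    refine ⟨Or.inl (hprop P hP).1, ?_⟩
    have h1 : ((P.walk.length : ℕ) : ℝ) ≤ (n : ℝ) := by exact_mod_cast (hprop P hP).2
    have h2 : (n:ℝ) ≤ 16 * K / lam := Nat.floor_le h160
    linarith

end
end
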